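/- arXiv:1705.05339 — 10 statements merged into one kernel-verified Lean document; each statement's English description precedes it below -/
import Mathlib

section
/- Let φ_1, …, φ_r be any orthonormal family in H (with 1 ≤ r ≤ M). Then the mean-square projection error of the snapshots onto span{φ_1,…,φ_r} is bounded below by the tail sum of the correlation-matrix eigenvalues: (1/M) Σ_{k=1}^{M} ‖u_k − Σ_{i=1}^{r} ⟨u_k, φ_i⟩ φ_i‖² ≥ Σ_{i=r+1}^{M} λ_i. -/
open scoped BigOperators

/-- For any orthonormal family `φ_1, …, φ_r` in `H` (`1 ≤ r ≤ M`), the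
mean-square projection error of the snapshots onto `span{φ_1,…,φ_r}` is bounded below by
the tail sum of the eigenvalues of the correlation matrix. -/
theorem pod_projection_error_lower_bound
    {H : Type*} [NormedAddCommGroup H] [InnerProductSpace ℝ H]
    (M : ℕ) (hM : 1 ≤ M) (u : Fin M → H)
    (K : Matrix (Fin M) (Fin M) ℝ)
    (hK : ∀ k l : Fin M, K k l = (M : ℝ)⁻¹ * (inner ℝ (u k) (u l) : ℝ))
    (lam : Fin M → ℝ) (v : Fin M → (Fin M → ℝ))
    (hlam_nonneg : ∀ i, 0 ≤ lam i)
    (hlam_sorted : ∀ i j : Fin M, i ≤ j → lam j ≤ lam i)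
    (heig : ∀ l, K.mulVec (v l) = lam l • v l)
    (horth : ∀ l l' : Fin M, dotProduct (v l) (v l') = if l = l' then 1 else 0)
    (r : ℕ) (hr : 1 ≤ r) (hrM : r ≤ M)
    (φ : Fin r → H) (hφ : Orthonormal ℝ φ) :
    (∑ i ∈ Finset.univ.filter fun i : Fin M => r ≤ (i : ℕ), lam i) ≤
      (M : ℝ)⁻¹ * ∑ k, ‖u k - ∑ i, (inner ℝ (u k) (φ i) : ℝ) • φ i‖ ^ 2 := by
  classical
  have hM0 : (0:ℝ) < M := by exact_mod_cast hM
  set c : Fin M → Fin r → ℝ := fun k i => inner ℝ (u k) (φ i) with hc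
  -- row orthonormality of v as sums
  have hrow : ∀ l l' : Fin M, ∑ k, v l k * v l' k = if l = l' then 1 else 0 := by
    intro l l'; simpa [dotProduct] using horth l l'
  -- column orthonormality
  set V : Matrix (Fin M) (Fin M) ℝ := Matrix.of v with hV
  have hVVt : V * V.transpose = 1 := by
    ext l l'
    simpa [Matrix.mul_apply, hV, Matrix.one_apply] using hrow l l'
  have hVtV : V.transpose * V = 1 := mul_eq_one_comm.mp hVVt
  have hcol : ∀ k m : Fin M, ∑ l, v l k * v l m = if k = m then 1 else 0 := by
    intro k m
    have := congrFun (congrFun hVtV k) m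
    simpa [Matrix.mul_apply, hV, Matrix.one_apply] using this
  -- eigen relation pointwise
  have heig' : ∀ l k, ∑ m, K k m * v l m = lam l * v l k := by
    intro l k
    have := congrFun (heig l) k
    simpa [Matrix.mulVec, dotProduct] using this
  -- trace identity
  have hKkk : ∀ k, K k k = ∑ l, lam l * (v l k * v l k) := by
    intro k
    calc K k k = ∑ m, K k m * (if m = k then 1 else 0) := by simp
      _ = ∑ m, K k m * ∑ l, v l m * v l k := by
          refine Finset.sum_congr rfl fun m _ => ?_; rw [hcol m k]
      _ = ∑ m, ∑ l, K k m * (v l m * v l k) := by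
          refine Finset.sum_congr rfl fun m _ => ?_; rw [Finset.mul_sum]
      _ = ∑ l, ∑ m, K k m * (v l m * v l k) := Finset.sum_comm
      _ = ∑ l, (∑ m, K k m * v l m) * v l k := by
          refine Finset.sum_congr rfl fun l _ => ?_
          rw [Finset.sum_mul]; refine Finset.sum_congr rfl fun m _ => by ring
      _ = ∑ l, lam l * (v l k * v l k) := by
          refine Finset.sum_congr rfl fun l _ => ?_; rw [heig' l k]; ring
  have htrace : (M:ℝ)⁻¹ * ∑ k, ‖u k‖^2 = ∑ l, lam l := by
    have h1 : ∀ k : Fin M, (M:ℝ)⁻¹ * ‖u k‖^2 = K k k := fun k => by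
      rw [hK k k, real_inner_self_eq_norm_sq]
    calc (M:ℝ)⁻¹ * ∑ k, ‖u k‖^2 = ∑ k, (M:ℝ)⁻¹ * ‖u k‖^2 := Finset.mul_sum _ _ _
      _ = ∑ k, K k k := Finset.sum_congr rfl fun k _ => h1 k
      _ = ∑ k, ∑ l, lam l * (v l k * v l k) := Finset.sum_congr rfl fun k _ => hKkk k
      _ = ∑ l, ∑ k, lam l * (v l k * v l k) := Finset.sum_comm
      _ = ∑ l, lam l * ∑ k, v l k * v l k := by
          refine Finset.sum_congr rfl fun l _ => ?_; rw [Finset.mul_sum]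
      _ = ∑ l, lam l := by
          refine Finset.sum_congr rfl fun l _ => ?_; rw [hrow l l]; simp
  -- the vectors z
  set z : Fin M → H := fun l => ∑ k, v l k • u k with hz
  have hzz : ∀ l l' : Fin M, (inner ℝ (z l) (z l') : ℝ)
      = (M:ℝ) * (if l = l' then lam l else 0) := by
    intro l l'
    have h0 : (inner ℝ (z l) (z l') : ℝ) = ∑ k, ∑ m, v l k * (v l' m * inner ℝ (u k) (u m)) := by
      rw [hz]
      rw [sum_inner]
      refine Finset.sum_congr rfl fun k _ => ?_
      rw [real_inner_smul_left, inner_sum]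
      rw [Finset.mul_sum]
      refine Finset.sum_congr rfl fun m _ => ?_
      rw [real_inner_smul_right]
    rw [h0]
    have h2 : ∀ k m : Fin M, (inner ℝ (u k) (u m) : ℝ) = (M:ℝ) * K k m := by
      intro k m; rw [hK k m]; field_simp
    calc (∑ k, ∑ m, v l k * (v l' m * inner ℝ (u k) (u m)))
        = ∑ k, v l k * ((M:ℝ) * ∑ m, K k m * v l' m) := by
          refine Finset.sum_congr rfl fun k _ => ?_
          rw [Finset.mul_sum, Finset.mul_sum]
          refine Finset.sum_congr rfl fun m _ => ?_
          rw [h2 k m]; ring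
      _ = ∑ k, v l k * ((M:ℝ) * (lam l' * v l' k)) := by
          refine Finset.sum_congr rfl fun k _ => ?_; rw [heig' l' k]
      _ = (M:ℝ) * (lam l' * ∑ k, v l k * v l' k) := by
          rw [Finset.mul_sum, Finset.mul_sum]
          refine Finset.sum_congr rfl fun k _ => by ring
      _ = (M:ℝ) * (if l = l' then lam l else 0) := by
          rw [hrow l l']
          by_cases h : l = l' <;> simp [h]
  have hznorm : ∀ l, ‖z l‖^2 = (M:ℝ) * lam l := by
    intro l
    rw [← real_inner_self_eq_norm_sq, hzz l l]; simp
  -- u in terms of z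
  have hu : ∀ k, u k = ∑ l, v l k • z l := by
    intro k
    calc u k = ∑ m, (if k = m then (1:ℝ) else 0) • u m := by simp
      _ = ∑ m, (∑ l, v l k * v l m) • u m := by
          refine Finset.sum_congr rfl fun m _ => ?_; rw [hcol k m]
      _ = ∑ m, ∑ l, (v l k * v l m) • u m := by
          refine Finset.sum_congr rfl fun m _ => ?_; rw [Finset.sum_smul]
      _ = ∑ l, ∑ m, (v l k * v l m) • u m := Finset.sum_comm
      _ = ∑ l, v l k • z l := by
          refine Finset.sum_congr rfl fun l _ => ?_
          rw [hz, Finset.smul_sum]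
          refine Finset.sum_congr rfl fun m _ => ?_
          rw [smul_smul]
  set w : Fin M → Fin r → ℝ := fun l i => inner ℝ (z l) (φ i) with hw
  have hwdef : ∀ l i, (inner ℝ (z l) (φ i) : ℝ) = w l i := fun _ _ => rfl
  have hck : ∀ k i, c k i = ∑ l, v l k * w l i := by
    intro k i
    show (inner ℝ (u k) (φ i) : ℝ) = _
    rw [hu k, sum_inner]
    refine Finset.sum_congr rfl fun l _ => ?_
    rw [real_inner_smul_left, hwdef]
  have hsum_c : ∀ i, ∑ k, (c k i)^2 = ∑ l, (w l i)^2 := by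
    intro i
    calc ∑ k, (c k i)^2
        = ∑ k, ∑ l, ∑ l', (v l k * w l i) * (v l' k * w l' i) := by
          refine Finset.sum_congr rfl fun k _ => ?_
          rw [hck k i, sq, Finset.sum_mul_sum]
      _ = ∑ l, ∑ l', (∑ k, v l k * v l' k) * (w l i * w l' i) := by
          rw [Finset.sum_comm]
          refine Finset.sum_congr rfl fun l _ => ?_
          rw [Finset.sum_comm]
          refine Finset.sum_congr rfl fun l' _ => ?_
          rw [Finset.sum_mul]
          refine Finset.sum_congr rfl fun k _ => by ring
      _ = ∑ l, (w l i)^2 := by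
          refine Finset.sum_congr rfl fun l _ => ?_
          rw [Finset.sum_eq_single l]
          · rw [hrow l l]; simp [sq]
          · intro l' _ hne
            rw [hrow l l', if_neg (Ne.symm hne)]; ring
          · intro h; exact absurd (Finset.mem_univ l) h
  -- Bessel per l
  have hbessel1 : ∀ l, ∑ i, (w l i)^2 ≤ (M:ℝ) * lam l := by
    intro l
    have hB := hφ.sum_inner_products_le (z l) (s := Finset.univ)
    rw [hznorm l] at hB
    calc ∑ i, (w l i)^2 = ∑ i, ‖(inner ℝ (φ i) (z l) : ℝ)‖^2 := by
          refine Finset.sum_congr rfl fun i _ => ?_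
          rw [real_inner_comm, Real.norm_eq_abs, sq_abs, hwdef]
      _ ≤ (M:ℝ) * lam l := hB
  -- orthonormal family from nonzero eigenvalues
  set S : Finset (Fin M) := Finset.univ.filter (fun l => lam l ≠ 0) with hS
  set e : {x // x ∈ S} → H := fun l => (Real.sqrt ((M:ℝ) * lam l.1))⁻¹ • z l.1 with he
  have hSpos : ∀ l : {x // x ∈ S}, 0 < (M:ℝ) * lam l.1 := by
    intro l
    have hl : lam l.1 ≠ 0 := (Finset.mem_filter.mp l.2).2
    exact mul_pos hM0 (lt_of_le_of_ne (hlam_nonneg l.1) (Ne.symm hl))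
  have he_on : Orthonormal ℝ e := by
    rw [orthonormal_iff_ite]
    intro l l'
    show (inner ℝ ((Real.sqrt ((M:ℝ) * lam l.1))⁻¹ • z l.1)
      ((Real.sqrt ((M:ℝ) * lam l'.1))⁻¹ • z l'.1) : ℝ) = _
    rw [real_inner_smul_left, real_inner_smul_right, hzz]
    by_cases h : l = l'
    · subst h
      rw [if_pos rfl, if_pos rfl]
      have hpos := hSpos l
      have hsne : Real.sqrt ((M:ℝ) * lam l.1) ≠ 0 := (Real.sqrt_pos.mpr hpos).ne'
      have hl0 : 0 < lam l.1 :=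
        lt_of_le_of_ne (hlam_nonneg l.1) (Ne.symm (Finset.mem_filter.mp l.2).2)
      have hM' : Real.sqrt (M:ℝ) * Real.sqrt (M:ℝ) = (M:ℝ) := Real.mul_self_sqrt hM0.le
      have hl' : Real.sqrt (lam l.1) * Real.sqrt (lam l.1) = lam l.1 :=
        Real.mul_self_sqrt hl0.le
      field_simp
      rw [Real.sq_sqrt hpos.le]

    · have h2 : l.1 ≠ l'.1 := fun hh => h (Subtype.ext hh)
      rw [if_neg h2, if_neg h]
      ring
  -- Bessel per i, summed over nonzero eigenvalue indices
  have hbessel2 : ∀ i : Fin r, ∑ l ∈ S, ((M:ℝ) * lam l)⁻¹ * (w l i)^2 ≤ 1 := by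
    intro i
    have hb := he_on.sum_inner_products_le (φ i) (s := Finset.univ)
    rw [hφ.1 i] at hb
    have hconv : ∑ l : {x // x ∈ S}, ‖(inner ℝ (e l) (φ i) : ℝ)‖^2
        = ∑ l ∈ S, ((M:ℝ) * lam l)⁻¹ * (w l i)^2 := by
      rw [← Finset.sum_coe_sort S (fun l => ((M:ℝ) * lam l)⁻¹ * (w l i)^2)]
      refine Finset.sum_congr rfl fun l _ => ?_
      calc ‖(inner ℝ (e l) (φ i) : ℝ)‖^2
          = ((Real.sqrt ((M:ℝ) * lam l.1))⁻¹)^2 * (w l.1 i)^2 := by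
            show ‖(inner ℝ ((Real.sqrt ((M:ℝ) * lam l.1))⁻¹ • z l.1) (φ i) : ℝ)‖^2 = _
            rw [real_inner_smul_left, Real.norm_eq_abs, abs_mul, mul_pow, sq_abs, sq_abs,
              hwdef]
        _ = ((M:ℝ) * lam l.1)⁻¹ * (w l.1 i)^2 := by
            rw [← Real.sqrt_inv, Real.sq_sqrt (inv_nonneg.mpr (hSpos l).le)]
    rw [hconv] at hb
    simpa using hb
  -- define t and s
  set t : Fin M → ℝ := fun l => (M:ℝ)⁻¹ * ∑ i, (w l i)^2 with ht
  have htdef : ∀ l, t l = (M:ℝ)⁻¹ * ∑ i, (w l i)^2 := fun _ => rfl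
  have ht_nonneg : ∀ l, 0 ≤ t l := fun l =>
    mul_nonneg (inv_nonneg.mpr hM0.le) (Finset.sum_nonneg fun i _ => sq_nonneg _)
  have ht_le : ∀ l, t l ≤ lam l := by
    intro l
    rw [htdef]
    calc (M:ℝ)⁻¹ * ∑ i, (w l i)^2 ≤ (M:ℝ)⁻¹ * ((M:ℝ) * lam l) :=
      mul_le_mul_of_nonneg_left (hbessel1 l) (inv_nonneg.mpr hM0.le)
      _ = lam l := by field_simp
  set s : Fin M → ℝ := fun l => if lam l = 0 then 0 else t l / lam l with hs
  have hsdef : ∀ l, s l = if lam l = 0 then 0 else t l / lam l := fun _ => rfl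
  have hts : ∀ l, t l = lam l * s l := by
    intro l
    rw [hsdef]
    by_cases h : lam l = 0
    · simp only [if_pos h, mul_zero]
      exact le_antisymm (h ▸ ht_le l) (ht_nonneg l)
    · rw [if_neg h]; field_simp
  have hs_nonneg : ∀ l, 0 ≤ s l := by
    intro l
    rw [hsdef]
    by_cases h : lam l = 0
    · simp [h]
    · rw [if_neg h]
      exact div_nonneg (ht_nonneg l) (hlam_nonneg l)
  have hs_le_one : ∀ l, s l ≤ 1 := by
    intro l
    rw [hsdef]
    by_cases h : lam l = 0
    · simp [h]
    · rw [if_neg h]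
      rw [div_le_one (lt_of_le_of_ne (hlam_nonneg l) (Ne.symm h))]
      exact ht_le l
  have hs_sum : ∑ l, s l ≤ (r:ℝ) := by
    have key : ∀ l ∈ S, s l = ∑ i, ((M:ℝ) * lam l)⁻¹ * (w l i)^2 := by
      intro l hl
      have hne : lam l ≠ 0 := (Finset.mem_filter.mp hl).2
      rw [hsdef, if_neg hne, htdef, Finset.mul_sum, Finset.sum_div]
      refine Finset.sum_congr rfl fun i _ => ?_
      rw [mul_inv, div_eq_mul_inv]
      ring
    have h1 : ∑ l ∈ S, s l ≤ (r:ℝ) := by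
      calc ∑ l ∈ S, s l = ∑ l ∈ S, ∑ i, ((M:ℝ) * lam l)⁻¹ * (w l i)^2 :=
            Finset.sum_congr rfl key
        _ = ∑ i : Fin r, ∑ l ∈ S, ((M:ℝ) * lam l)⁻¹ * (w l i)^2 := Finset.sum_comm
        _ ≤ ∑ _i : Fin r, (1:ℝ) := Finset.sum_le_sum fun i _ => hbessel2 i
        _ = (r:ℝ) := by simp
    have h2 : ∑ l, s l = ∑ l ∈ S, s l := by
      refine (Finset.sum_subset (Finset.subset_univ S) ?_).symm
      intro l _ hl
      have : lam l = 0 := by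
        by_contra hne
        exact hl (Finset.mem_filter.mpr ⟨Finset.mem_univ l, hne⟩)
      rw [hsdef, if_pos this]
    rw [h2]; exact h1
  -- the two index sets
  set F : Finset (Fin M) := Finset.univ.filter (fun i : Fin M => (i:ℕ) < r) with hF
  set G : Finset (Fin M) := Finset.univ.filter (fun i : Fin M => r ≤ (i:ℕ)) with hG
  have hFG : ∀ f : Fin M → ℝ, ∑ l ∈ G, f l + ∑ l ∈ F, f l = ∑ l, f l := by
    intro f
    have h := Finset.sum_filter_add_sum_filter_not Finset.univ
      (fun i : Fin M => r ≤ (i:ℕ)) f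
    have hFeq : F = Finset.univ.filter (fun i : Fin M => ¬ r ≤ (i:ℕ)) := by
      rw [hF]; ext i; simp [not_le]
    rw [hFeq]
    exact h
  have hcardF : F.card = r := by
    have heq : F = Finset.map (Fin.castLEEmb hrM) Finset.univ := by
      ext i
      simp only [hF, Finset.mem_filter, Finset.mem_univ, true_and, Finset.mem_map,
        Fin.castLEEmb_apply]
      constructor
      · intro hi; exact ⟨⟨i, hi⟩, rfl⟩
      · rintro ⟨j, rfl⟩; exact j.isLt
    simp [heq]
  -- the rearrangement inequality
  have hmain : ∑ l, lam l * s l ≤ ∑ l ∈ F, lam l := by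
    rcases eq_or_lt_of_le hrM with hEq | hLt
    · have hFuniv : F = Finset.univ := by
        rw [hF]; ext i
        simp only [Finset.mem_filter, Finset.mem_univ, true_and, iff_true]
        exact hEq ▸ i.isLt
      rw [hFuniv]
      refine Finset.sum_le_sum fun l _ => ?_
      exact mul_le_of_le_one_right (hlam_nonneg l) (hs_le_one l)
    · set j : Fin M := ⟨r, hLt⟩ with hj
      set ρ : ℝ := lam j with hρ
      have hρ0 : 0 ≤ ρ := hlam_nonneg j
      have hFle : ∀ l ∈ F, ρ ≤ lam l := by
        intro l hl
        have : (l:ℕ) < r := (Finset.mem_filter.mp hl).2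
        exact hlam_sorted l j (by simp [hj, Fin.le_def]; omega)
      have hGle : ∀ l ∈ G, lam l ≤ ρ := by
        intro l hl
        have : r ≤ (l:ℕ) := (Finset.mem_filter.mp hl).2
        exact hlam_sorted j l (by simp [hj, Fin.le_def]; omega)
      have h1 : ∑ l ∈ G, lam l * s l ≤ ρ * ∑ l ∈ G, s l := by
        rw [Finset.mul_sum]
        exact Finset.sum_le_sum fun l hl =>
          mul_le_mul_of_nonneg_right (hGle l hl) (hs_nonneg l)
      have h2 : ρ * ∑ l ∈ F, (1 - s l) ≤ ∑ l ∈ F, lam l * (1 - s l) := by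
        rw [Finset.mul_sum]
        exact Finset.sum_le_sum fun l hl =>
          mul_le_mul_of_nonneg_right (hFle l hl) (by linarith [hs_le_one l])
      have h3 : ∑ l ∈ F, lam l * (1 - s l) = ∑ l ∈ F, lam l - ∑ l ∈ F, lam l * s l := by
        rw [← Finset.sum_sub_distrib]
        refine Finset.sum_congr rfl fun l _ => by ring
      have h4 : ∑ l ∈ G, s l + ∑ l ∈ F, s l = ∑ l, s l := hFG s
      have h5 : ∑ l ∈ F, (1 - s l) = (r:ℝ) - ∑ l ∈ F, s l := by
        rw [Finset.sum_sub_distrib, Finset.sum_const, hcardF]; simp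
      have h6 : ∑ l ∈ G, lam l * s l + ∑ l ∈ F, lam l * s l = ∑ l, lam l * s l :=
        hFG (fun l => lam l * s l)
      have h7 : ρ * (∑ l ∈ G, s l + ∑ l ∈ F, s l) ≤ ρ * (r:ℝ) := by
        rw [h4]
        exact mul_le_mul_of_nonneg_left hs_sum hρ0
      nlinarith [h1, h2, h3, h5, h6, h7]
  -- norm expansion
  have hnorm : ∀ k, ‖u k - ∑ i, c k i • φ i‖^2 = ‖u k‖^2 - ∑ i, (c k i)^2 := by
    intro k
    have hb : (inner ℝ (u k) (∑ i, c k i • φ i) : ℝ) = ∑ i, (c k i)^2 := by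
      rw [inner_sum]
      refine Finset.sum_congr rfl fun i _ => ?_
      rw [real_inner_smul_right]
      have hcd : (inner ℝ (u k) (φ i) : ℝ) = c k i := rfl
      rw [hcd, sq]
    have hbb : ‖∑ i, c k i • φ i‖^2 = ∑ i, (c k i)^2 := by
      have h := hφ.inner_sum (c k) (c k) Finset.univ
      rw [← real_inner_self_eq_norm_sq, h]
      refine Finset.sum_congr rfl fun i _ => ?_
      simp [sq]
    rw [norm_sub_sq_real, hb, hbb]; ring
  -- assemble
  have herr : (M:ℝ)⁻¹ * ∑ k, ‖u k - ∑ i, c k i • φ i‖^2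
      = ∑ l, lam l - ∑ l, lam l * s l := by
    have hA : ∑ k, ‖u k - ∑ i, c k i • φ i‖^2
        = ∑ k, ‖u k‖^2 - ∑ k, ∑ i, (c k i)^2 := by
      rw [← Finset.sum_sub_distrib]
      exact Finset.sum_congr rfl fun k _ => hnorm k
    have hB : ∑ k, ∑ i, (c k i)^2 = ∑ l, ∑ i, (w l i)^2 := by
      calc ∑ k, ∑ i, (c k i)^2 = ∑ i, ∑ k, (c k i)^2 := Finset.sum_comm
        _ = ∑ i, ∑ l, (w l i)^2 := Finset.sum_congr rfl fun i _ => hsum_c i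
        _ = ∑ l, ∑ i, (w l i)^2 := Finset.sum_comm
    have hC : (M:ℝ)⁻¹ * ∑ l, ∑ i, (w l i)^2 = ∑ l, lam l * s l := by
      rw [Finset.mul_sum]
      refine Finset.sum_congr rfl fun l _ => ?_
      rw [← htdef, hts]
    rw [hA, mul_sub, htrace, hB, hC]
  rw [herr]
  have hGsum : ∑ l ∈ G, lam l + ∑ l ∈ F, lam l = ∑ l, lam l := hFG lam
  have hFpos : ∑ l ∈ F, lam l ≥ 0 := Finset.sum_nonneg fun l _ => hlam_nonneg l
  show ∑ i ∈ G, lam i ≤ _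
  linarith [hmain]
end

section
/- For all indices l, l' with λ_l > 0 and λ_{l'} > 0, the POD modes are orthonormal: ⟨ψ_l, ψ_{l'}⟩ = 1 if l = l' and ⟨ψ_l, ψ_{l'}⟩ = 0 if l ≠ l'. -/
open scoped BigOperators

/-- for indices `l, l'` with `λ_l > 0` and `λ_{l'} > 0`, the POD modes
`ψ_l = (M λ_l)^{-1/2} Σ_i (v_l)_i u_i` are orthonormal. -/
theorem pod_modes_orthonormal
    {H : Type*} [NormedAddCommGroup H] [InnerProductSpace ℝ H]
    (M : ℕ) (hM : 1 ≤ M) (u : Fin M → H)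
    (K : Matrix (Fin M) (Fin M) ℝ)
    (hK : ∀ k l : Fin M, K k l = (M : ℝ)⁻¹ * (inner ℝ (u k) (u l) : ℝ))
    (lam : Fin M → ℝ) (v : Fin M → (Fin M → ℝ))
    (hlam_nonneg : ∀ i, 0 ≤ lam i)
    (hlam_sorted : ∀ i j : Fin M, i ≤ j → lam j ≤ lam i)
    (heig : ∀ l, K.mulVec (v l) = lam l • v l)
    (horth : ∀ l l' : Fin M, dotProduct (v l) (v l') = if l = l' then 1 else 0)
    (ψ : Fin M → H)
    (hψ : ∀ l, ψ l = (Real.sqrt (M * lam l))⁻¹ • ∑ i, v l i • u i)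
    (l l' : Fin M) (hl : 0 < lam l) (hl' : 0 < lam l') :
    (inner ℝ (ψ l) (ψ l') : ℝ) = if l = l' then 1 else 0 := by
  have hMpos : (0:ℝ) < M := by exact_mod_cast hM
  have huK : ∀ i j : Fin M, (inner ℝ (u i) (u j) : ℝ) = (M:ℝ) * K i j := by
    intro i j
    rw [hK i j]
    field_simp
  have hinner : ∀ i : Fin M,
      (inner ℝ (u i) (∑ j, v l' j • u j) : ℝ) = (M:ℝ) * lam l' * v l' i := by
    intro i
    rw [inner_sum]
    have : ∑ j, (inner ℝ (u i) (v l' j • u j) : ℝ)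
        = (M:ℝ) * ∑ j, K i j * v l' j := by
      rw [Finset.mul_sum]
      refine Finset.sum_congr rfl fun j _ => ?_
      rw [real_inner_smul_right, huK i j]; ring
    rw [this]
    have := congrFun (heig l') i
    simp only [Matrix.mulVec, dotProduct, Pi.smul_apply, smul_eq_mul] at this
    rw [this]; ring
  have key : (inner ℝ (∑ i, v l i • u i) (∑ j, v l' j • u j) : ℝ)
      = (M:ℝ) * lam l' * (if l = l' then 1 else 0) := by
    rw [sum_inner]
    have : ∑ i, (inner ℝ (v l i • u i) (∑ j, v l' j • u j) : ℝ)
        = (M:ℝ) * lam l' * ∑ i, v l i * v l' i := by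
      rw [Finset.mul_sum]
      refine Finset.sum_congr rfl fun i _ => ?_
      rw [real_inner_smul_left, hinner i]; ring
    rw [this, ← dotProduct, horth l l']
  rw [hψ l, hψ l', real_inner_smul_left, real_inner_smul_right, key]
  by_cases h : l = l'
  · subst h
    simp only [if_pos rfl, mul_one]
    have hMl : (0:ℝ) < (M:ℝ) * lam l := mul_pos hMpos hl
    have hs : Real.sqrt ((M:ℝ) * lam l) ≠ 0 := by positivity
    field_simp
    rw [Real.sq_sqrt hMl.le]
  · simp [h]
end

section
/- Let d be the number of positive eigenvalues of K (so λ_d > 0 and λ_i = 0 for i > d) and let 1 ≤ r ≤ d. Then the POD modes ψ_1,…,ψ_r achieve exactly the eigenvalue tail sum as mean-square projection error: (1/M) Σ_{k=1}^{M} ‖u_k − Σ_{i=1}^{r} ⟨u_k, ψ_i⟩ ψ_i‖² = Σ_{i=r+1}^{M} λ_i. -/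
open scoped BigOperators

/-- if `d` is the number of positive eigenvalues of `K` and `1 ≤ r ≤ d`,
then the POD modes `ψ_1, …, ψ_r` achieve exactly the eigenvalue tail sum as
mean-square projection error:
`(1/M) Σ_{k=1}^M ‖u_k − Σ_{i=1}^r ⟨u_k, ψ_i⟩ ψ_i‖² = Σ_{i=r+1}^M λ_i`. -/
theorem pod_projection_error_eq_tail_sum
    {H : Type*} [NormedAddCommGroup H] [InnerProductSpace ℝ H]
    (M : ℕ) (hM : 1 ≤ M) (u : Fin M → H)
    (K : Matrix (Fin M) (Fin M) ℝ)
    (hK : ∀ k l : Fin M, K k l = (M : ℝ)⁻¹ * (inner ℝ (u k) (u l) : ℝ))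
    (lam : Fin M → ℝ) (v : Fin M → (Fin M → ℝ))
    (hlam_nonneg : ∀ i, 0 ≤ lam i)
    (hlam_sorted : ∀ i j : Fin M, i ≤ j → lam j ≤ lam i)
    (heig : ∀ l, K.mulVec (v l) = lam l • v l)
    (horth : ∀ l l' : Fin M, dotProduct (v l) (v l') = if l = l' then 1 else 0)
    (ψ : Fin M → H)
    (hψ : ∀ l, ψ l = (Real.sqrt (M * lam l))⁻¹ • ∑ i, v l i • u i)
    (d : ℕ) (hdM : d ≤ M)
    (hd : ∀ i : Fin M, (i : ℕ) < d ↔ 0 < lam i)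
    (r : ℕ) (hr : 1 ≤ r) (hrd : r ≤ d) :
    (M : ℝ)⁻¹ * ∑ k, ‖u k - ∑ i ∈ Finset.univ.filter fun i : Fin M => (i : ℕ) < r,
        (inner ℝ (u k) (ψ i) : ℝ) • ψ i‖ ^ 2 =
      ∑ i ∈ Finset.univ.filter fun i : Fin M => r ≤ (i : ℕ), lam i := by
  have hMpos : (0:ℝ) < M := by exact_mod_cast hM
  have hM0 : (M:ℝ) ≠ 0 := ne_of_gt hMpos
  have hinner : ∀ k l : Fin M, (inner ℝ (u k) (u l) : ℝ) = M * K k l := by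
    intro k l; rw [hK]; field_simp
  set s : Finset (Fin M) := Finset.univ.filter fun i : Fin M => (i : ℕ) < r with hs
  have hposs : ∀ i ∈ s, 0 < lam i := by
    intro i hi
    rw [hs, Finset.mem_filter] at hi
    exact (hd i).mp (lt_of_lt_of_le hi.2 hrd)
  -- inner products of snapshots with modes
  have hup : ∀ l : Fin M, 0 < lam l → ∀ k : Fin M,
      (inner ℝ (u k) (ψ l) : ℝ) = Real.sqrt (M * lam l) * v l k := by
    intro l hl k
    have hMl : (0:ℝ) < M * lam l := by positivity
    have hsq : Real.sqrt (M * lam l) * Real.sqrt (M * lam l) = M * lam l :=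
      Real.mul_self_sqrt hMl.le
    have hsne : Real.sqrt (M * lam l) ≠ 0 := by positivity
    have key : (Real.sqrt (M * lam l))⁻¹ * (M * lam l) = Real.sqrt (M * lam l) := by
      nth_rewrite 2 [← hsq]; rw [← mul_assoc, inv_mul_cancel₀ hsne, one_mul]
    have h1 : (inner ℝ (u k) (ψ l) : ℝ)
        = (Real.sqrt (M * lam l))⁻¹ * ∑ i, v l i * (M * K k i) := by
      rw [hψ, real_inner_smul_right, inner_sum]
      congr 1
      refine Finset.sum_congr rfl fun i _ => ?_
      rw [real_inner_smul_right, hinner]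
    have h2 : ∑ i, v l i * (M * K k i) = M * (K.mulVec (v l) k) := by
      rw [Matrix.mulVec, dotProduct, Finset.mul_sum]
      refine Finset.sum_congr rfl fun i _ => ?_; ring
    rw [h1, h2, heig]
    simp only [Pi.smul_apply, smul_eq_mul]
    linear_combination (v l k) * key
  -- orthonormality of modes with positive eigenvalues
  have hpp : ∀ l : Fin M, 0 < lam l → ∀ m : Fin M, 0 < lam m →
      (inner ℝ (ψ l) (ψ m) : ℝ) = if l = m then 1 else 0 := by
    intro l hl m hm
    have hMl : (0:ℝ) < M * lam l := by positivity
    have hsne : Real.sqrt (M * lam l) ≠ 0 := by positivity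
    have h1 : (inner ℝ (ψ l) (ψ m) : ℝ)
        = (Real.sqrt (M * lam l))⁻¹ * ∑ i, v l i * (Real.sqrt (M * lam m) * v m i) := by
      conv_lhs => rw [hψ l]
      rw [real_inner_smul_left, sum_inner]
      congr 1
      refine Finset.sum_congr rfl fun i _ => ?_
      rw [real_inner_smul_left, hup m hm i]
    have h2 : ∑ i, v l i * (Real.sqrt (M * lam m) * v m i)
        = Real.sqrt (M * lam m) * dotProduct (v l) (v m) := by
      rw [dotProduct, Finset.mul_sum]
      refine Finset.sum_congr rfl fun i _ => ?_; ring
    rw [h1, h2, horth]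
    by_cases h : l = m
    · subst h
      rw [if_pos rfl, mul_one]
      exact inv_mul_cancel₀ hsne
    · simp [h]
  -- per-snapshot error expansion
  have hnorm : ∀ k : Fin M,
      ‖u k - ∑ i ∈ s, (inner ℝ (u k) (ψ i) : ℝ) • ψ i‖ ^ 2
        = ‖u k‖ ^ 2 - ∑ i ∈ s, (inner ℝ (u k) (ψ i) : ℝ) ^ 2 := by
    intro k
    set c : Fin M → ℝ := fun i => (inner ℝ (u k) (ψ i) : ℝ) with hc
    set P : H := ∑ i ∈ s, c i • ψ i with hP
    have hiP : (inner ℝ (u k) P : ℝ) = ∑ i ∈ s, c i ^ 2 := by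
      rw [hP, inner_sum]
      refine Finset.sum_congr rfl fun i hi => ?_
      rw [real_inner_smul_right, sq]
    have hψP : ∀ i ∈ s, (inner ℝ (ψ i) P : ℝ) = c i := by
      intro i hi
      rw [hP, inner_sum]
      have h3 : ∀ j ∈ s, (inner ℝ (ψ i) (c j • ψ j) : ℝ) = if j = i then c i else 0 := by
        intro j hj
        rw [real_inner_smul_right, hpp i (hposs i hi) j (hposs j hj)]
        by_cases h : i = j
        · subst h; simp
        · simp [h, Ne.symm h]
      rw [Finset.sum_congr rfl h3, Finset.sum_ite_eq' s i (fun _ => c i), if_pos hi]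
    have hPP : (inner ℝ P P : ℝ) = ∑ i ∈ s, c i ^ 2 := by
      conv_lhs => rw [hP, sum_inner]
      refine Finset.sum_congr rfl fun i hi => ?_
      rw [real_inner_smul_left, hψP i hi, sq]
    have hPn : ‖P‖ ^ 2 = ∑ i ∈ s, c i ^ 2 := by
      rw [← real_inner_self_eq_norm_sq, hPP]
    rw [norm_sub_sq_real, hiP, hPn]
    ring
  -- column orthonormality
  set V : Matrix (Fin M) (Fin M) ℝ := Matrix.of v with hV
  have hVVt : V * V.transpose = 1 := by
    ext l l'
    simpa [hV, Matrix.mul_apply, Matrix.one_apply, dotProduct] using horth l l'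
  have hVtV : V.transpose * V = 1 := mul_eq_one_comm.mp hVVt
  have hcols : ∀ k j : Fin M, ∑ l, v l k * v l j = if k = j then 1 else 0 := by
    intro k j
    simpa [hV, Matrix.mul_apply, Matrix.one_apply] using
      Matrix.ext_iff.mpr hVtV k j
  -- trace identity
  have h1 : ∀ l, lam l = dotProduct (v l) (K.mulVec (v l)) := by
    intro l
    rw [heig, dotProduct_smul, horth l l]
    simp
  have htrace : ∑ l, lam l = ∑ k, K k k := by
    calc ∑ l, lam l
        = ∑ l, ∑ k, ∑ j, v l k * (K k j * v l j) := by
          refine Finset.sum_congr rfl fun l _ => ?_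
          rw [h1 l, dotProduct]
          refine Finset.sum_congr rfl fun k _ => ?_
          rw [Matrix.mulVec, dotProduct, Finset.mul_sum]
      _ = ∑ k, ∑ j, K k j * ∑ l, v l k * v l j := by
          rw [Finset.sum_comm]
          refine Finset.sum_congr rfl fun k _ => ?_
          rw [Finset.sum_comm]
          refine Finset.sum_congr rfl fun j _ => ?_
          rw [Finset.mul_sum]
          refine Finset.sum_congr rfl fun l _ => ?_
          ring
      _ = ∑ k, K k k := by
          refine Finset.sum_congr rfl fun k _ => ?_
          simp [hcols, mul_ite]
  -- sum of squared coefficients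
  have hcoef : ∀ i ∈ s, ∑ k, (inner ℝ (u k) (ψ i) : ℝ) ^ 2 = M * lam i := by
    intro i hi
    have hpi := hposs i hi
    have hMl : (0:ℝ) < M * lam i := by positivity
    have hsq : Real.sqrt (M * lam i) * Real.sqrt (M * lam i) = M * lam i :=
      Real.mul_self_sqrt hMl.le
    have : ∑ k, (inner ℝ (u k) (ψ i) : ℝ) ^ 2 = (M * lam i) * ∑ k, v i k * v i k := by
      rw [Finset.mul_sum]
      refine Finset.sum_congr rfl fun k _ => ?_
      rw [hup i hpi k]
      rw [mul_pow, sq, hsq]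
      ring
    rw [this]
    have := horth i i
    rw [dotProduct] at this
    rw [this]
    simp
  -- norms of snapshots
  have hnormu : ∑ k, ‖u k‖ ^ 2 = M * ∑ k, K k k := by
    rw [Finset.mul_sum]
    refine Finset.sum_congr rfl fun k _ => ?_
    rw [← real_inner_self_eq_norm_sq, hinner]
  -- assemble
  have hsplit : ∑ i ∈ s, lam i + ∑ i ∈ Finset.univ.filter (fun i : Fin M => r ≤ (i : ℕ)), lam i
      = ∑ l, lam l := by
    rw [hs]
    have : (Finset.univ.filter fun i : Fin M => r ≤ (i : ℕ))
        = Finset.univ.filter fun i : Fin M => ¬ ((i : ℕ) < r) := by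
      apply Finset.filter_congr
      intro i _
      simp [not_lt]
    rw [this]
    exact Finset.sum_filter_add_sum_filter_not _ _ _
  have hLHS : ∑ k, ‖u k - ∑ i ∈ s, (inner ℝ (u k) (ψ i) : ℝ) • ψ i‖ ^ 2
      = M * ∑ l, lam l - ∑ i ∈ s, (M * lam i) := by
    rw [Finset.sum_congr rfl fun k _ => hnorm k, Finset.sum_sub_distrib, hnormu, htrace,
      Finset.sum_comm]
    congr 1
    exact Finset.sum_congr rfl fun i hi => hcoef i hi
  rw [hLHS]
  have : ∑ i ∈ s, (M:ℝ) * lam i = M * ∑ i ∈ s, lam i := by rw [Finset.mul_sum]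
  rw [this, ← mul_sub, inv_mul_cancel_left₀ hM0]
  linarith [hsplit]
end

section
/- Let d be the number of positive eigenvalues of K (so λ_d > 0 and λ_i = 0 for i > d), let 0 ≤ r ≤ d, and let a : H × H → ℝ be any symmetric bilinear form. Writing ρ_k := u_k − Σ_{i=1}^{r} ⟨u_k, ψ_i⟩ ψ_i for the POD projection residual of the k-th snapshot, one has the exact identity (1/M) Σ_{k=1}^{M} a(ρ_k, ρ_k) = Σ_{m=r+1}^{d} λ_m a(ψ_m, ψ_m). (The paper's Lemma 2.2 is the special case where a is the H¹ inner product, giving (1/M) Σ_k ‖ρ_k‖₁² = Σ_{m=r+1}^{d} ‖ψ_m‖₁² λ_m.) -/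
open scoped BigOperators

/-- for `0 ≤ r ≤ d` (`d` the number of positive eigenvalues of `K`) and
any symmetric bilinear form `a` on `H`, the POD projection residuals
`ρ_k = u_k − Σ_{i=1}^r ⟨u_k, ψ_i⟩ ψ_i` satisfy
`(1/M) Σ_k a(ρ_k, ρ_k) = Σ_{m=r+1}^d λ_m a(ψ_m, ψ_m)`. -/
theorem pod_residual_bilinear_identity
    {H : Type*} [NormedAddCommGroup H] [InnerProductSpace ℝ H]
    (M : ℕ) (hM : 1 ≤ M) (u : Fin M → H)
    (K : Matrix (Fin M) (Fin M) ℝ)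
    (hK : ∀ k l : Fin M, K k l = (M : ℝ)⁻¹ * (inner ℝ (u k) (u l) : ℝ))
    (lam : Fin M → ℝ) (v : Fin M → (Fin M → ℝ))
    (hlam_nonneg : ∀ i, 0 ≤ lam i)
    (hlam_sorted : ∀ i j : Fin M, i ≤ j → lam j ≤ lam i)
    (heig : ∀ l, K.mulVec (v l) = lam l • v l)
    (horth : ∀ l l' : Fin M, dotProduct (v l) (v l') = if l = l' then 1 else 0)
    (ψ : Fin M → H)
    (hψ : ∀ l, ψ l = (Real.sqrt (M * lam l))⁻¹ • ∑ i, v l i • u i)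
    (d : ℕ) (hdM : d ≤ M)
    (hd : ∀ i : Fin M, (i : ℕ) < d ↔ 0 < lam i)
    (r : ℕ) (hrd : r ≤ d)
    (a : H →ₗ[ℝ] H →ₗ[ℝ] ℝ) (hsymm : ∀ x y : H, a x y = a y x)
    (ρ : Fin M → H)
    (hρ : ∀ k, ρ k = u k - ∑ i ∈ Finset.univ.filter fun i : Fin M => (i : ℕ) < r,
        (inner ℝ (u k) (ψ i) : ℝ) • ψ i) :
    (M : ℝ)⁻¹ * ∑ k, a (ρ k) (ρ k) =
      ∑ m ∈ Finset.univ.filter fun m : Fin M => r ≤ (m : ℕ) ∧ (m : ℕ) < d,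
        lam m * a (ψ m) (ψ m) := by
  have hM0 : (0:ℝ) < M := by exact_mod_cast hM
  set c : Fin M → Fin M → ℝ := fun k i => Real.sqrt (M * lam i) * v i k with hcdef
  have hs : ∀ i : Fin M, 0 < lam i → 0 < Real.sqrt (M * lam i) := by
    intro i hi; exact Real.sqrt_pos.2 (by positivity)
  have hssq : ∀ i : Fin M, 0 < lam i →
      Real.sqrt (M * lam i) * Real.sqrt (M * lam i) = M * lam i := by
    intro i hi; exact Real.mul_self_sqrt (by positivity)
  -- inner (u k) (ψ i) = c k i for positive eigenvalues
  have hinner : ∀ i : Fin M, 0 < lam i → ∀ k, (inner ℝ (u k) (ψ i) : ℝ) = c k i := by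
    intro i hi k
    rw [hψ, real_inner_smul_right, inner_sum]
    have h1 : ∀ j, (inner ℝ (u k) (v i j • u j) : ℝ) = (M:ℝ) * (K k j * v i j) := by
      intro j
      rw [real_inner_smul_right, hK]
      field_simp
    rw [Finset.sum_congr rfl (fun j _ => h1 j), ← Finset.mul_sum]
    have h2 : ∑ j, K k j * v i j = lam i * v i k := by
      have := congrFun (heig i) k
      simpa [Matrix.mulVec, dotProduct] using this
    rw [h2]
    have h3 : (M:ℝ) * (lam i * v i k)
        = Real.sqrt (M * lam i) * (Real.sqrt (M * lam i) * v i k) := by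
      linear_combination (- v i k) * (hssq i hi)
    rw [h3, ← mul_assoc, inv_mul_cancel₀ (ne_of_gt (hs i hi)), one_mul, hcdef]
  -- sum of v i k • u k
  have hvu : ∀ i : Fin M, 0 < lam i →
      ∑ k, v i k • u k = Real.sqrt (M * lam i) • ψ i := by
    intro i hi
    rw [hψ, smul_smul, mul_inv_cancel₀ (ne_of_gt (hs i hi)), one_smul]
  have hcu : ∀ i : Fin M, 0 < lam i →
      ∑ k, c k i • u k = ((M:ℝ) * lam i) • ψ i := by
    intro i hi
    have h1 : ∑ k, c k i • u k = Real.sqrt (M * lam i) • ∑ k, v i k • u k := by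
      rw [Finset.smul_sum]
      exact Finset.sum_congr rfl fun k _ => by rw [hcdef, mul_smul]
    rw [h1, hvu i hi, smul_smul, hssq i hi]
  have hcc : ∀ i j : Fin M, 0 < lam i → 0 < lam j →
      ∑ k, c k i * c k j = if i = j then (M:ℝ) * lam i else 0 := by
    intro i j hi hj
    have h1 : ∑ k, c k i * c k j
        = Real.sqrt (M * lam i) * Real.sqrt (M * lam j) * dotProduct (v i) (v j) := by
      simp only [hcdef, dotProduct, Finset.mul_sum]
      exact Finset.sum_congr rfl fun k _ => by ring
    rw [h1, horth]
    by_cases h : i = j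
    · subst h
      rw [if_pos rfl, if_pos rfl, mul_one]
      exact hssq i hi
    · rw [if_neg h, if_neg h, mul_zero]
  -- general expansion lemma
  have hexp : ∀ (b : H →ₗ[ℝ] H →ₗ[ℝ] ℝ) (s : ℕ), s ≤ d →
      (M:ℝ)⁻¹ * ∑ k, b (u k - ∑ i ∈ Finset.univ.filter fun i : Fin M => (i : ℕ) < s, c k i • ψ i)
          (u k - ∑ i ∈ Finset.univ.filter fun i : Fin M => (i : ℕ) < s, c k i • ψ i)
        = (M:ℝ)⁻¹ * ∑ k, b (u k) (u k)
          - ∑ i ∈ Finset.univ.filter fun i : Fin M => (i : ℕ) < s, lam i * b (ψ i) (ψ i) := by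
    intro b s hsd
    set Fs := Finset.univ.filter fun i : Fin M => (i : ℕ) < s with hFs
    have hpos : ∀ i ∈ Fs, 0 < lam i := by
      intro i hi
      rw [hFs, Finset.mem_filter] at hi
      exact (hd i).1 (lt_of_lt_of_le hi.2 hsd)
    have key : ∑ k, b (u k - ∑ i ∈ Fs, c k i • ψ i) (u k - ∑ i ∈ Fs, c k i • ψ i)
        = ∑ k, b (u k) (u k) - (M:ℝ) * ∑ i ∈ Fs, lam i * b (ψ i) (ψ i) := by
      have expand : ∀ k, b (u k - ∑ i ∈ Fs, c k i • ψ i) (u k - ∑ i ∈ Fs, c k i • ψ i)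
          = b (u k) (u k)
            - ∑ i ∈ Fs, c k i * b (u k) (ψ i)
            - ∑ i ∈ Fs, c k i * b (ψ i) (u k)
            + ∑ i ∈ Fs, ∑ j ∈ Fs, c k i * c k j * b (ψ i) (ψ j) := by
        intro k
        have e1 : b (u k) (∑ i ∈ Fs, c k i • ψ i) = ∑ i ∈ Fs, c k i * b (u k) (ψ i) := by
          simp only [map_sum, map_smul, smul_eq_mul]
        have e2 : b (∑ i ∈ Fs, c k i • ψ i) (u k) = ∑ i ∈ Fs, c k i * b (ψ i) (u k) := by
          simp only [map_sum, LinearMap.sum_apply, map_smul, LinearMap.smul_apply, smul_eq_mul]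
        have e3 : b (∑ i ∈ Fs, c k i • ψ i) (∑ j ∈ Fs, c k j • ψ j)
            = ∑ i ∈ Fs, ∑ j ∈ Fs, c k i * c k j * b (ψ i) (ψ j) := by
          simp only [map_sum, LinearMap.sum_apply, map_smul, LinearMap.smul_apply, smul_eq_mul,
            Finset.mul_sum]
          rw [Finset.sum_comm]
          exact Finset.sum_congr rfl fun i _ => Finset.sum_congr rfl fun j _ => by ring
        simp only [map_sub, LinearMap.sub_apply]
        rw [e1, e2, e3]
        ring
      rw [Finset.sum_congr rfl fun k _ => expand k]
      have T2 : ∑ k, ∑ i ∈ Fs, c k i * b (u k) (ψ i)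
          = (M:ℝ) * ∑ i ∈ Fs, lam i * b (ψ i) (ψ i) := by
        rw [Finset.sum_comm, Finset.mul_sum]
        refine Finset.sum_congr rfl fun i hi => ?_
        have h1 : ∑ k, c k i * b (u k) (ψ i) = b (∑ k, c k i • u k) (ψ i) := by
          simp only [map_sum, LinearMap.sum_apply, map_smul, LinearMap.smul_apply, smul_eq_mul]
        rw [h1, hcu i (hpos i hi), map_smul, LinearMap.smul_apply, smul_eq_mul]; ring
      have T3 : ∑ k, ∑ i ∈ Fs, c k i * b (ψ i) (u k)
          = (M:ℝ) * ∑ i ∈ Fs, lam i * b (ψ i) (ψ i) := by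
        rw [Finset.sum_comm, Finset.mul_sum]
        refine Finset.sum_congr rfl fun i hi => ?_
        have h1 : ∑ k, c k i * b (ψ i) (u k) = b (ψ i) (∑ k, c k i • u k) := by
          simp only [map_sum, map_smul, smul_eq_mul]
        rw [h1, hcu i (hpos i hi), map_smul, smul_eq_mul]; ring
      have T4 : ∑ k, ∑ i ∈ Fs, ∑ j ∈ Fs, c k i * c k j * b (ψ i) (ψ j)
          = (M:ℝ) * ∑ i ∈ Fs, lam i * b (ψ i) (ψ i) := by
        rw [Finset.sum_comm, Finset.mul_sum]
        refine Finset.sum_congr rfl fun i hi => ?_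
        rw [Finset.sum_comm]
        have t : ∀ j ∈ Fs, ∑ k, c k i * c k j * b (ψ i) (ψ j)
            = if i = j then ((M:ℝ) * lam i) * b (ψ i) (ψ j) else 0 := by
          intro j hj
          rw [← Finset.sum_mul, hcc i j (hpos i hi) (hpos j hj), ite_mul, zero_mul]
        rw [Finset.sum_congr rfl t,
          Finset.sum_ite_eq Fs i (fun j => ((M:ℝ) * lam i) * b (ψ i) (ψ j)), if_pos hi]
        ring
      rw [Finset.sum_add_distrib, Finset.sum_sub_distrib, Finset.sum_sub_distrib, T2, T3, T4]
      ring
    rw [key, mul_sub, ← mul_assoc, inv_mul_cancel₀ (ne_of_gt hM0), one_mul]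
  -- column orthonormality
  have hVtV : ∀ k j : Fin M, ∑ l, v l k * v l j = if k = j then 1 else 0 := by
    have h1 : (Matrix.of (fun l k => v l k)) * Matrix.transpose (Matrix.of (fun l k => v l k)) = 1 := by
      ext l l'
      simp only [Matrix.mul_apply, Matrix.transpose_apply, Matrix.of_apply, Matrix.one_apply]
      simpa [dotProduct] using horth l l'
    have h2 := mul_eq_one_comm.mp h1
    intro k j
    have h3 := congrFun (congrFun h2 k) j
    simpa [Matrix.mul_apply, Matrix.one_apply] using h3
  -- trace identity
  have htrace : ∑ l, lam l = ∑ k, K k k := by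
    have h1 : ∀ l, lam l = ∑ k, v l k * (∑ j, K k j * v l j) := by
      intro l
      have he : ∀ k, ∑ j, K k j * v l j = lam l * v l k := by
        intro k
        have := congrFun (heig l) k
        simpa [Matrix.mulVec, dotProduct] using this
      rw [Finset.sum_congr rfl fun k _ => by rw [he k]]
      have h2 : ∑ k, v l k * (lam l * v l k) = lam l * ∑ k, v l k * v l k := by
        rw [Finset.mul_sum]; exact Finset.sum_congr rfl fun k _ => by ring
      rw [h2]
      have h3 := horth l l
      simp [dotProduct] at h3
      rw [h3, mul_one]
    rw [Finset.sum_congr rfl fun l _ => h1 l, Finset.sum_comm]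
    refine Finset.sum_congr rfl fun k _ => ?_
    have h4 : ∀ l, v l k * ∑ j, K k j * v l j = ∑ j, K k j * (v l k * v l j) := by
      intro l; rw [Finset.mul_sum]; exact Finset.sum_congr rfl fun j _ => by ring
    rw [Finset.sum_congr rfl fun l _ => h4 l, Finset.sum_comm]
    have h5 : ∀ j, ∑ l, K k j * (v l k * v l j) = K k j * (if k = j then 1 else 0) := by
      intro j; rw [← Finset.mul_sum, hVtV k j]
    rw [Finset.sum_congr rfl fun j _ => h5 j]
    simp
  have hsum_uu : (M:ℝ)⁻¹ * ∑ k, (inner ℝ (u k) (u k) : ℝ) = ∑ l, lam l := by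
    rw [htrace, Finset.mul_sum]
    exact Finset.sum_congr rfl fun k _ => by rw [hK]
  have hlam_zero : ∀ i : Fin M, ¬ ((i:ℕ) < d) → lam i = 0 := by
    intro i hi
    rcases lt_or_eq_of_le (hlam_nonneg i) with h | h
    · exact absurd ((hd i).2 h) hi
    · exact h.symm
  have hlam_sum : ∑ l, lam l
      = ∑ l ∈ Finset.univ.filter fun i : Fin M => (i : ℕ) < d, lam l := by
    symm
    apply Finset.sum_subset (Finset.filter_subset _ _)
    intro x _ hx
    apply hlam_zero
    intro h
    exact hx (Finset.mem_filter.mpr ⟨Finset.mem_univ x, h⟩)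
  -- normalization of POD modes
  have hψnorm : ∀ i : Fin M, 0 < lam i → (inner ℝ (ψ i) (ψ i) : ℝ) = 1 := by
    intro i hi
    nth_rewrite 1 [hψ i]
    rw [real_inner_smul_left, sum_inner]
    have h1 : ∀ k, (inner ℝ (v i k • u k) (ψ i) : ℝ) = Real.sqrt (M * lam i) * (v i k * v i k) := by
      intro k
      rw [real_inner_smul_left, hinner i hi k, hcdef]
      ring
    rw [Finset.sum_congr rfl fun k _ => h1 k, ← Finset.mul_sum]
    have h2 := horth i i
    simp [dotProduct] at h2
    rw [h2, mul_one, inv_mul_cancel₀ (ne_of_gt (hs i hi))]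
  -- the d-truncation residual vanishes
  have hρd : ∀ k, u k - ∑ m ∈ Finset.univ.filter fun m : Fin M => (m : ℕ) < d,
      c k m • ψ m = 0 := by
    have h0 := hexp (innerₗ H) d le_rfl
    have hb : ∀ x y : H, (innerₗ H) x y = (inner ℝ x y : ℝ) := fun x y => rfl
    have hR : ∑ i ∈ Finset.univ.filter fun i : Fin M => (i : ℕ) < d,
        lam i * (innerₗ H) (ψ i) (ψ i)
        = ∑ i ∈ Finset.univ.filter fun i : Fin M => (i : ℕ) < d, lam i := by
      refine Finset.sum_congr rfl fun i hi => ?_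
      rw [hb, hψnorm i ((hd i).1 (Finset.mem_filter.mp hi).2), mul_one]
    have huu : (M:ℝ)⁻¹ * ∑ k, (innerₗ H) (u k) (u k)
        = ∑ l ∈ Finset.univ.filter fun i : Fin M => (i : ℕ) < d, lam l := by
      simp only [hb]
      rw [hsum_uu, hlam_sum]
    rw [hR, huu, sub_self] at h0
    have hz : ∑ k, (inner ℝ (u k - ∑ m ∈ Finset.univ.filter fun m : Fin M => (m : ℕ) < d,
        c k m • ψ m) (u k - ∑ m ∈ Finset.univ.filter fun m : Fin M => (m : ℕ) < d,
        c k m • ψ m) : ℝ) = 0 := by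
      have := mul_eq_zero.mp h0
      rcases this with h | h
      · exact absurd h (by positivity)
      · exact h
    have hterm := (Finset.sum_eq_zero_iff_of_nonneg
      (fun k _ => real_inner_self_nonneg)).mp hz
    intro k
    have := hterm k (Finset.mem_univ k)
    exact inner_self_eq_zero.mp (by exact_mod_cast this)
  -- rewrite ρ in terms of c
  have hρc : ∀ k, ρ k = u k - ∑ i ∈ Finset.univ.filter fun i : Fin M => (i : ℕ) < r,
      c k i • ψ i := by
    intro k
    rw [hρ k]
    congr 1
    refine Finset.sum_congr rfl fun i hi => ?_
    rw [hinner i ((hd i).1 (lt_of_lt_of_le (Finset.mem_filter.mp hi).2 hrd)) k]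
  -- the a-value of the full expansion
  have haud : (M:ℝ)⁻¹ * ∑ k, a (u k) (u k)
      = ∑ m ∈ Finset.univ.filter fun m : Fin M => (m : ℕ) < d, lam m * a (ψ m) (ψ m) := by
    have h0 := hexp a d le_rfl
    have hz : ∀ k : Fin M, a (u k - ∑ m ∈ Finset.univ.filter fun m : Fin M => (m : ℕ) < d,
        c k m • ψ m) (u k - ∑ m ∈ Finset.univ.filter fun m : Fin M => (m : ℕ) < d,
        c k m • ψ m) = 0 := by
      intro k
      rw [hρd k]
      simp
    rw [Finset.sum_congr rfl fun k _ => hz k] at h0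
    simp only [Finset.sum_const_zero, mul_zero] at h0
    linarith [h0]
  -- main computation
  rw [Finset.sum_congr rfl fun k _ => by rw [hρc k], hexp a r hrd, haud]
  -- split the sum
  have hsplit := Finset.sum_filter_add_sum_filter_not
    (Finset.univ.filter fun m : Fin M => (m : ℕ) < d)
    (fun m : Fin M => (m : ℕ) < r) (fun m => lam m * a (ψ m) (ψ m))
  have e1 : (Finset.univ.filter fun m : Fin M => (m : ℕ) < d).filter
      (fun m : Fin M => (m : ℕ) < r) = Finset.univ.filter fun m : Fin M => (m : ℕ) < r := by
    ext m
    simp only [Finset.mem_filter, Finset.mem_univ, true_and]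
    omega
  have e2 : (Finset.univ.filter fun m : Fin M => (m : ℕ) < d).filter
      (fun m : Fin M => ¬ (m : ℕ) < r)
      = Finset.univ.filter fun m : Fin M => r ≤ (m : ℕ) ∧ (m : ℕ) < d := by
    ext m
    simp only [Finset.mem_filter, Finset.mem_univ, true_and, not_lt]
    omega
  rw [e1, e2] at hsplit
  linarith [hsplit]
end

section
/- If w, u ∈ X satisfy the post-processing (Step 2) relation, then the numerical dissipation identity holds: ‖w‖² = ‖u‖² + 2 ν_T Δt ‖(I − P) G((w + u)/2)‖². -/
/-- if `w, u ∈ X` satisfy the post-processing (Step 2) relation, then the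
numerical dissipation identity holds:
`‖w‖² = ‖u‖² + 2 ν_T Δt ‖(I − P) G((w + u)/2)‖²`. -/
theorem step2_numerical_dissipation
    {X Y : Type*} [NormedAddCommGroup X] [InnerProductSpace ℝ X]
    [NormedAddCommGroup Y] [InnerProductSpace ℝ Y]
    (G : X →ₗ[ℝ] Y) (P : Y →ₗ[ℝ] Y)
    (Δt νT : ℝ) (hΔt : 0 < Δt) (hνT : 0 < νT)
    (w u : X)
    (hstep2 : ∀ ψ : X, (inner ℝ (Δt⁻¹ • (w - u)) ψ : ℝ) =
      νT * (inner ℝ (G ((2:ℝ)⁻¹ • (w + u)) - P (G ((2:ℝ)⁻¹ • (w + u))))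
        (G ψ - P (G ψ)) : ℝ)) :
    ‖w‖ ^ 2 = ‖u‖ ^ 2 +
      2 * νT * Δt * ‖G ((2:ℝ)⁻¹ • (w + u)) - P (G ((2:ℝ)⁻¹ • (w + u)))‖ ^ 2 := by
  have h := hstep2 ((2:ℝ)⁻¹ • (w + u))
  set v := G ((2:ℝ)⁻¹ • (w + u)) - P (G ((2:ℝ)⁻¹ • (w + u))) with hv
  rw [real_inner_smul_left, real_inner_smul_right, inner_sub_left,
    inner_add_right, inner_add_right, real_inner_self_eq_norm_sq,
    real_inner_self_eq_norm_sq, real_inner_comm u w,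
    real_inner_self_eq_norm_sq] at h
  have hΔt' : Δt ≠ 0 := ne_of_gt hΔt
  field_simp at h
  nlinarith [h]
end

section
/- Unconditional stability of the backward Euler post-processed VMS-POD scheme: suppose sequences (u^n)_{n=0}^{M} and (w^n)_{n=1}^{M} in X are such that for each n = 0, …, M−1, the Step 1 relation holds with previous value u^n, new value w^{n+1} and forcing f^{n+1}, and the post-processing (Step 2) relation holds between w^{n+1} and u^{n+1}. Then for any Δt > 0: ‖u^M‖² + Σ_{n=0}^{M−1} [ 2 ν_T Δt ‖(I − P) G((w^{n+1} + u^{n+1})/2)‖² + ‖w^{n+1} − u^n‖² + ν Δt ‖G w^{n+1}‖² ] ≤ ‖u^0‖² + ν^{-1} Δt Σ_{n=0}^{M−1} F_{n+1}². -/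
open scoped BigOperators

/-- unconditional stability of the backward Euler post-processed
VMS-POD scheme. -/
theorem backwardEuler_vms_pod_stability
    {X Y : Type*} [NormedAddCommGroup X] [InnerProductSpace ℝ X]
    [NormedAddCommGroup Y] [InnerProductSpace ℝ Y]
    (G : X →ₗ[ℝ] Y) (P : Y →ₗ[ℝ] Y)
    (ν νT Δt : ℝ) (hν : 0 < ν) (hνT : 0 < νT) (hΔt : 0 < Δt)
    (b : X →ₗ[ℝ] X →ₗ[ℝ] X →ₗ[ℝ] ℝ) (hb : ∀ x y : X, b x y y = 0)
    (M : ℕ) (f : ℕ → X) (F : ℕ → ℝ)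
    (hF : ∀ n, 1 ≤ n → n ≤ M → 0 ≤ F n)
    (hf : ∀ n, 1 ≤ n → n ≤ M → ∀ v : X, |(inner ℝ (f n) v : ℝ)| ≤ F n * ‖G v‖)
    (u w : ℕ → X)
    (hstep1 : ∀ n < M, ∀ ψ : X,
      (inner ℝ (Δt⁻¹ • (w (n+1) - u n)) ψ : ℝ) + b (w (n+1)) (w (n+1)) ψ
        + ν * (inner ℝ (G (w (n+1))) (G ψ) : ℝ) = (inner ℝ (f (n+1)) ψ : ℝ))
    (hstep2 : ∀ n < M, ∀ ψ : X,
      (inner ℝ (Δt⁻¹ • (w (n+1) - u (n+1))) ψ : ℝ) =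
        νT * (inner ℝ (G ((2:ℝ)⁻¹ • (w (n+1) + u (n+1)))
            - P (G ((2:ℝ)⁻¹ • (w (n+1) + u (n+1)))))
          (G ψ - P (G ψ)) : ℝ)) :
    ‖u M‖ ^ 2 + ∑ n ∈ Finset.range M,
        (2 * νT * Δt * ‖G ((2:ℝ)⁻¹ • (w (n+1) + u (n+1)))
            - P (G ((2:ℝ)⁻¹ • (w (n+1) + u (n+1))))‖ ^ 2
          + ‖w (n+1) - u n‖ ^ 2 + ν * Δt * ‖G (w (n+1))‖ ^ 2)
      ≤ ‖u 0‖ ^ 2 + ν⁻¹ * Δt * ∑ n ∈ Finset.range M, F (n+1) ^ 2 := by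
  have key : ∀ n < M,
      ‖u (n+1)‖ ^ 2 + (2 * νT * Δt * ‖G ((2:ℝ)⁻¹ • (w (n+1) + u (n+1)))
            - P (G ((2:ℝ)⁻¹ • (w (n+1) + u (n+1))))‖ ^ 2
          + ‖w (n+1) - u n‖ ^ 2 + ν * Δt * ‖G (w (n+1))‖ ^ 2)
        ≤ ‖u n‖ ^ 2 + ν⁻¹ * Δt * F (n+1) ^ 2 := by
    intro n hn
    have h1 := hstep1 n hn (w (n+1))
    rw [hb] at h1
    have h2 := hstep2 n hn ((2:ℝ)⁻¹ • (w (n+1) + u (n+1)))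
    have e1 : (inner ℝ (Δt⁻¹ • (w (n+1) - u n)) (w (n+1)) : ℝ)
        = Δt⁻¹ * (‖w (n+1)‖ ^ 2 - inner ℝ (u n) (w (n+1))) := by
      rw [real_inner_smul_left, inner_sub_left, real_inner_self_eq_norm_sq]
    have e2 : ‖w (n+1) - u n‖ ^ 2
        = ‖w (n+1)‖ ^ 2 - 2 * inner ℝ (w (n+1)) (u n) + ‖u n‖ ^ 2 :=
      norm_sub_sq_real _ _
    have e3 : (inner ℝ (Δt⁻¹ • (w (n+1) - u (n+1)))
          ((2:ℝ)⁻¹ • (w (n+1) + u (n+1))) : ℝ)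
        = Δt⁻¹ * (2⁻¹ * (‖w (n+1)‖ ^ 2 - ‖u (n+1)‖ ^ 2)) := by
      rw [real_inner_smul_left, real_inner_smul_right, inner_sub_left,
        inner_add_right, inner_add_right, real_inner_self_eq_norm_sq,
        real_inner_self_eq_norm_sq, real_inner_comm (u (n+1)) (w (n+1))]
      ring
    rw [e1, real_inner_self_eq_norm_sq] at h1
    rw [e3, real_inner_self_eq_norm_sq] at h2
    have hcomm : (inner ℝ (u n) (w (n+1)) : ℝ) = inner ℝ (w (n+1)) (u n) :=
      real_inner_comm _ _
    have hfw : (inner ℝ (f (n+1)) (w (n+1)) : ℝ) ≤ F (n+1) * ‖G (w (n+1))‖ :=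
      (le_abs_self _).trans (hf (n+1) (by omega) (by omega) (w (n+1)))
    have hAM : 2 * (F (n+1) * ‖G (w (n+1))‖)
        ≤ ν * ‖G (w (n+1))‖ ^ 2 + ν⁻¹ * F (n+1) ^ 2 := by
      have h0 : ν * ‖G (w (n+1))‖ ^ 2 + ν⁻¹ * F (n+1) ^ 2
            - 2 * (F (n+1) * ‖G (w (n+1))‖)
          = (ν * ‖G (w (n+1))‖ - F (n+1)) ^ 2 / ν := by
        field_simp
        ring
      nlinarith [div_nonneg (sq_nonneg (ν * ‖G (w (n+1))‖ - F (n+1))) hν.le]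
    -- clear Δt⁻¹
    have hΔt' : Δt ≠ 0 := hΔt.ne'
    have h1' : ‖w (n+1)‖ ^ 2 - inner ℝ (u n) (w (n+1))
        = Δt * ((inner ℝ (f (n+1)) (w (n+1)) : ℝ) - ν * ‖G (w (n+1))‖ ^ 2) := by
      field_simp at h1
      linarith
    have h2' : ‖w (n+1)‖ ^ 2 - ‖u (n+1)‖ ^ 2
        = 2 * Δt * (νT * ‖G ((2:ℝ)⁻¹ • (w (n+1) + u (n+1)))
            - P (G ((2:ℝ)⁻¹ • (w (n+1) + u (n+1))))‖ ^ 2) := by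
      rw [← h2]
      field_simp
    nlinarith [mul_le_mul_of_nonneg_left hfw (by positivity : (0:ℝ) ≤ 2 * Δt),
      mul_le_mul_of_nonneg_left hAM hΔt.le]
  have main : ∀ m, m ≤ M → ‖u m‖ ^ 2 + ∑ n ∈ Finset.range m,
        (2 * νT * Δt * ‖G ((2:ℝ)⁻¹ • (w (n+1) + u (n+1)))
            - P (G ((2:ℝ)⁻¹ • (w (n+1) + u (n+1))))‖ ^ 2
          + ‖w (n+1) - u n‖ ^ 2 + ν * Δt * ‖G (w (n+1))‖ ^ 2)
      ≤ ‖u 0‖ ^ 2 + ν⁻¹ * Δt * ∑ n ∈ Finset.range m, F (n+1) ^ 2 := by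
    intro m
    induction m with
    | zero => simp
    | succ k ih =>
      intro hk
      have ih' := ih (by omega)
      have hk' := key k (by omega)
      rw [Finset.sum_range_succ, Finset.sum_range_succ]
      nlinarith [hk', ih']
  exact main M le_rfl
end

section
/- Stability of the intermediate (pre-processed) solution: under the same hypotheses as the backward Euler stability lemma (for each n = 0, …, M−1, Step 1 holds with previous value u^n, new value w^{n+1} and forcing f^{n+1}, and Step 2 holds between w^{n+1} and u^{n+1}), one has ‖w^M‖² + 2 ν_T Δt Σ_{n=0}^{M−2} ‖(I − P) G((w^{n+1} + u^{n+1})/2)‖² + Σ_{n=0}^{M−1} [ ‖w^{n+1} − u^n‖² + ν Δt ‖G w^{n+1}‖² ] ≤ ‖u^0‖² + ν^{-1} Δt Σ_{n=0}^{M−1} F_{n+1}². -/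
open scoped BigOperators

/-- stability of the intermediate (pre-processed) solution `w` of the
backward Euler post-processed VMS-POD scheme. -/
theorem backwardEuler_vms_pod_intermediate_stability
    {X Y : Type*} [NormedAddCommGroup X] [InnerProductSpace ℝ X]
    [NormedAddCommGroup Y] [InnerProductSpace ℝ Y]
    (G : X →ₗ[ℝ] Y) (P : Y →ₗ[ℝ] Y)
    (ν νT Δt : ℝ) (hν : 0 < ν) (hνT : 0 < νT) (hΔt : 0 < Δt)
    (b : X →ₗ[ℝ] X →ₗ[ℝ] X →ₗ[ℝ] ℝ) (hb : ∀ x y : X, b x y y = 0)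
    (M : ℕ) (hM : 1 ≤ M) (f : ℕ → X) (F : ℕ → ℝ)
    (hF : ∀ n, 1 ≤ n → n ≤ M → 0 ≤ F n)
    (hf : ∀ n, 1 ≤ n → n ≤ M → ∀ v : X, |(inner ℝ (f n) v : ℝ)| ≤ F n * ‖G v‖)
    (u w : ℕ → X)
    (hstep1 : ∀ n < M, ∀ ψ : X,
      (inner ℝ (Δt⁻¹ • (w (n+1) - u n)) ψ : ℝ) + b (w (n+1)) (w (n+1)) ψ
        + ν * (inner ℝ (G (w (n+1))) (G ψ) : ℝ) = (inner ℝ (f (n+1)) ψ : ℝ))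
    (hstep2 : ∀ n < M, ∀ ψ : X,
      (inner ℝ (Δt⁻¹ • (w (n+1) - u (n+1))) ψ : ℝ) =
        νT * (inner ℝ (G ((2:ℝ)⁻¹ • (w (n+1) + u (n+1)))
            - P (G ((2:ℝ)⁻¹ • (w (n+1) + u (n+1)))))
          (G ψ - P (G ψ)) : ℝ)) :
    ‖w M‖ ^ 2
      + 2 * νT * Δt * ∑ n ∈ Finset.range (M - 1),
          ‖G ((2:ℝ)⁻¹ • (w (n+1) + u (n+1)))
            - P (G ((2:ℝ)⁻¹ • (w (n+1) + u (n+1))))‖ ^ 2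
      + ∑ n ∈ Finset.range M, (‖w (n+1) - u n‖ ^ 2 + ν * Δt * ‖G (w (n+1))‖ ^ 2)
      ≤ ‖u 0‖ ^ 2 + ν⁻¹ * Δt * ∑ n ∈ Finset.range M, F (n+1) ^ 2 := by
  -- per-step energy estimate from Step 1
  have key : ∀ n < M, ‖w (n+1)‖ ^ 2 + (‖w (n+1) - u n‖ ^ 2 + ν * Δt * ‖G (w (n+1))‖ ^ 2)
      ≤ ‖u n‖ ^ 2 + ν⁻¹ * Δt * F (n+1) ^ 2 := by
    intro n hn
    have h1 := hstep1 n hn (w (n+1))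
    rw [hb, real_inner_smul_left, real_inner_self_eq_norm_sq] at h1
    have hpol : 2 * (inner ℝ (w (n+1) - u n) (w (n+1)) : ℝ)
        = ‖w (n+1)‖ ^ 2 - ‖u n‖ ^ 2 + ‖w (n+1) - u n‖ ^ 2 := by
      have h2 : ‖w (n+1) - u n‖ ^ 2
          = ‖w (n+1)‖ ^ 2 - 2 * (inner ℝ (w (n+1)) (u n) : ℝ) + ‖u n‖ ^ 2 :=
        norm_sub_sq_real _ _
      have h3 : (inner ℝ (w (n+1) - u n) (w (n+1)) : ℝ)
          = ‖w (n+1)‖ ^ 2 - (inner ℝ (w (n+1)) (u n) : ℝ) := by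
        rw [inner_sub_left, real_inner_self_eq_norm_sq, real_inner_comm]
      linarith
    have hfb := hf (n+1) (by omega) (by omega) (w (n+1))
    have hfb' : (inner ℝ (f (n+1)) (w (n+1)) : ℝ) ≤ F (n+1) * ‖G (w (n+1))‖ :=
      (le_abs_self _).trans hfb
    have hF' : 0 ≤ F (n+1) := hF (n+1) (by omega) (by omega)
    -- multiply h1 by 2 * Δt and use Young's inequality
    have hmul : ‖w (n+1)‖ ^ 2 - ‖u n‖ ^ 2 + ‖w (n+1) - u n‖ ^ 2
        + 2 * ν * Δt * ‖G (w (n+1))‖ ^ 2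
        = 2 * Δt * (inner ℝ (f (n+1)) (w (n+1)) : ℝ) := by
      have hc : Δt * Δt⁻¹ = 1 := mul_inv_cancel₀ (ne_of_gt hΔt)
      nlinarith [h1, hpol]
    have hyoung : 2 * F (n+1) * ‖G (w (n+1))‖
        ≤ ν⁻¹ * F (n+1) ^ 2 + ν * ‖G (w (n+1))‖ ^ 2 := by
      have hc : ν * ν⁻¹ = 1 := mul_inv_cancel₀ (ne_of_gt hν)
      have hsq := sq_nonneg (F (n+1) - ν * ‖G (w (n+1))‖)
      have hνinv : 0 < ν⁻¹ := inv_pos.mpr hν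
      nlinarith
    nlinarith [mul_le_mul_of_nonneg_left hfb' (le_of_lt hΔt),
      mul_le_mul_of_nonneg_left hyoung (le_of_lt hΔt)]
  -- Step-2 identity
  have id2 : ∀ n < M, ‖w (n+1)‖ ^ 2 = ‖u (n+1)‖ ^ 2
      + 2 * νT * Δt * ‖G ((2:ℝ)⁻¹ • (w (n+1) + u (n+1)))
          - P (G ((2:ℝ)⁻¹ • (w (n+1) + u (n+1))))‖ ^ 2 := by
    intro n hn
    have h2 := hstep2 n hn ((2:ℝ)⁻¹ • (w (n+1) + u (n+1)))
    rw [real_inner_smul_left, real_inner_smul_right, real_inner_self_eq_norm_sq] at h2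
    have hpol : (inner ℝ (w (n+1) - u (n+1)) (w (n+1) + u (n+1)) : ℝ)
        = ‖w (n+1)‖ ^ 2 - ‖u (n+1)‖ ^ 2 := by
      rw [inner_sub_left, inner_add_right, inner_add_right,
        real_inner_self_eq_norm_sq, real_inner_self_eq_norm_sq,
        real_inner_comm (u (n+1)) (w (n+1))]
      ring
    rw [hpol] at h2
    have hc : Δt * Δt⁻¹ = 1 := mul_inv_cancel₀ (ne_of_gt hΔt)
    nlinarith [h2]
  -- sum up
  obtain ⟨m, rfl⟩ : ∃ m, M = m + 1 := ⟨M - 1, (Nat.succ_pred_eq_of_pos hM).symm⟩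
  simp only [Nat.add_sub_cancel]
  have hsum1 : ∑ n ∈ Finset.range (m+1),
      (‖w (n+1)‖ ^ 2 + (‖w (n+1) - u n‖ ^ 2 + ν * Δt * ‖G (w (n+1))‖ ^ 2))
      ≤ ∑ n ∈ Finset.range (m+1), (‖u n‖ ^ 2 + ν⁻¹ * Δt * F (n+1) ^ 2) :=
    Finset.sum_le_sum (fun n hn => key n (Finset.mem_range.mp hn))
  rw [Finset.sum_add_distrib, Finset.sum_add_distrib, Finset.sum_add_distrib] at hsum1
  have hgoal : ∑ n ∈ Finset.range (m+1),
      (‖w (n+1) - u n‖ ^ 2 + ν * Δt * ‖G (w (n+1))‖ ^ 2)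
      = ∑ n ∈ Finset.range (m+1), ‖w (n+1) - u n‖ ^ 2
        + ∑ n ∈ Finset.range (m+1), ν * Δt * ‖G (w (n+1))‖ ^ 2 :=
    Finset.sum_add_distrib
  have hw : ∑ n ∈ Finset.range (m+1), ‖w (n+1)‖ ^ 2
      = ∑ n ∈ Finset.range m, ‖w (n+1)‖ ^ 2 + ‖w (m+1)‖ ^ 2 :=
    Finset.sum_range_succ _ _
  have hu : ∑ n ∈ Finset.range (m+1), ‖u n‖ ^ 2
      = ∑ n ∈ Finset.range m, ‖u (n+1)‖ ^ 2 + ‖u 0‖ ^ 2 :=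
    Finset.sum_range_succ' _ _
  have hwu : ∑ n ∈ Finset.range m, ‖w (n+1)‖ ^ 2
      = ∑ n ∈ Finset.range m, (‖u (n+1)‖ ^ 2
        + 2 * νT * Δt * ‖G ((2:ℝ)⁻¹ • (w (n+1) + u (n+1)))
            - P (G ((2:ℝ)⁻¹ • (w (n+1) + u (n+1))))‖ ^ 2) := by
    refine Finset.sum_congr rfl (fun n hn => ?_)
    exact id2 n (by have := Finset.mem_range.mp hn; omega)
  rw [Finset.sum_add_distrib] at hwu
  have hmulD : ∑ n ∈ Finset.range m, 2 * νT * Δt * ‖G ((2:ℝ)⁻¹ • (w (n+1) + u (n+1)))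
            - P (G ((2:ℝ)⁻¹ • (w (n+1) + u (n+1))))‖ ^ 2
      = 2 * νT * Δt * ∑ n ∈ Finset.range m, ‖G ((2:ℝ)⁻¹ • (w (n+1) + u (n+1)))
            - P (G ((2:ℝ)⁻¹ • (w (n+1) + u (n+1))))‖ ^ 2 :=
    (Finset.mul_sum _ _ _).symm
  have hmulF : ∑ n ∈ Finset.range (m+1), ν⁻¹ * Δt * F (n+1) ^ 2
      = ν⁻¹ * Δt * ∑ n ∈ Finset.range (m+1), F (n+1) ^ 2 :=
    (Finset.mul_sum _ _ _).symm
  linarith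
end

section
/- Conditional stability of the BDF2 post-processed VMS-POD scheme: assume additionally that ‖y − P y‖ ≤ ‖y‖ for all y ∈ Y (e.g., P is an orthogonal projection) and that ν_T < 4ν. Suppose sequences (u^n)_{n=0}^{M+1} and (w^n)_{n=1}^{M+1} in X satisfy w^1 = 0 and, for each n = 1, …, M, the BDF2 Step 1 relation holds with data (u^n, u^{n−1}), new value w^{n+1} and forcing f^{n+1}, and the post-processing (Step 2) relation holds between w^{n+1} and u^{n+1}. Then: ‖u^{M+1}‖² + ‖2u^{M+1} − u^M‖² + 2 ν_T Δt ‖(I − P) G((w^{M+1} + u^{M+1})/2)‖² + 2 ν Δt ‖G w^{M+1}‖² + Σ_{n=1}^{M} ‖w^{n+1} − 2u^n + u^{n−1}‖² + ((4ν − ν_T) Δt / 2) Σ_{n=1}^{M−1} ‖G w^{n+1}‖² ≤ ‖u^1‖² + ‖2u^1 − u^0‖² + (ν_T Δt / 2) ‖G u^1‖² + 2 ν^{-1} Δt Σ_{n=1}^{M} F_{n+1}². -/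
open scoped BigOperators

open scoped RealInnerProductSpace

lemma bdf2_inner_diff {E : Type*} [NormedAddCommGroup E] [InnerProductSpace ℝ E]
    (x y : E) : ⟪x - y, x + y⟫ = ‖x‖ ^ 2 - ‖y‖ ^ 2 := by
  simp [inner_sub_left, inner_add_right, real_inner_self_eq_norm_sq,
    real_inner_comm x y]

lemma bdf2_gstab {E : Type*} [NormedAddCommGroup E] [InnerProductSpace ℝ E]
    (a b c : E) :
    2 * ⟪(3:ℝ) • a - (4:ℝ) • b + c, a⟫ =
      ‖a‖ ^ 2 + ‖(2:ℝ) • a - b‖ ^ 2 + ‖a - (2:ℝ) • b + c‖ ^ 2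
        - ‖b‖ ^ 2 - ‖(2:ℝ) • b - c‖ ^ 2 := by
  simp only [← real_inner_self_eq_norm_sq]
  simp only [inner_sub_left, inner_add_left, inner_smul_left, inner_sub_right,
    inner_add_right, inner_smul_right, starRingEnd_apply, star_trivial]
  rw [real_inner_comm b a, real_inner_comm c a, real_inner_comm c b]
  ring

lemma bdf2_half_smul {X Y : Type*} [NormedAddCommGroup X] [InnerProductSpace ℝ X]
    [NormedAddCommGroup Y] [InnerProductSpace ℝ Y] (A : X →ₗ[ℝ] Y) (x : X) :
    A x = (2:ℝ) • A ((2:ℝ)⁻¹ • x) := by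
  rw [map_smul, smul_smul]
  norm_num

/-- monotonicity of the fluctuation seminorm under the post-processing step -/
lemma bdf2_mono {X Y : Type*} [NormedAddCommGroup X] [InnerProductSpace ℝ X]
    [NormedAddCommGroup Y] [InnerProductSpace ℝ Y] (A : X →ₗ[ℝ] Y)
    (c : ℝ) (hc : 0 < c) (a u' : X)
    (h2 : ∀ ψ : X, (⟪a - u', ψ⟫ : ℝ) = c * ⟪A ((2:ℝ)⁻¹ • (a + u')), A ψ⟫) :
    ‖A u'‖ ^ 2 ≤ ‖A a‖ ^ 2 := by
  have hpos : (0:ℝ) ≤ ⟪A ((2:ℝ)⁻¹ • (a + u')), A (a - u')⟫ := by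
    have h := h2 (a - u')
    have h0 : (0:ℝ) ≤ ⟪a - u', a - u'⟫ := real_inner_self_nonneg
    nlinarith
  have hd := bdf2_inner_diff (A a) (A u')
  rw [← map_sub, ← map_add, bdf2_half_smul A (a + u'), real_inner_smul_right] at hd
  have hcomm := real_inner_comm (A (a - u')) (A ((2:ℝ)⁻¹ • (a + u')))
  linarith

/-- the per-step energy estimate -/
lemma bdf2_key {X Y : Type*} [NormedAddCommGroup X] [InnerProductSpace ℝ X]
    [NormedAddCommGroup Y] [InnerProductSpace ℝ Y]
    (G A : X →ₗ[ℝ] Y) (ν νT Δt F' : ℝ)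
    (hν : 0 < ν) (hνT : 0 < νT) (hΔt : 0 < Δt) (hF' : 0 ≤ F')
    (a u' p q fv : X)
    (h2 : ∀ ψ : X, (⟪a - u', ψ⟫ : ℝ) = (Δt * νT) * ⟪A ((2:ℝ)⁻¹ • (a + u')), A ψ⟫)
    (h1 : (⟪(3:ℝ) • a - (4:ℝ) • p + q, a⟫ : ℝ) = 2 * Δt * (⟪fv, a⟫ - ν * ‖G a‖ ^ 2))
    (hfa : (⟪fv, a⟫ : ℝ) ≤ F' * ‖G a‖) :
    ‖u'‖ ^ 2 + ‖(2:ℝ) • u' - p‖ ^ 2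
      + 2 * νT * Δt * ‖A ((2:ℝ)⁻¹ • (a + u'))‖ ^ 2
      + ‖a - (2:ℝ) • p + q‖ ^ 2 + 2 * ν * Δt * ‖G a‖ ^ 2
    ≤ ‖p‖ ^ 2 + ‖(2:ℝ) • p - q‖ ^ 2 + νT * Δt / 2 * ‖A p‖ ^ 2
      + 2 * ν⁻¹ * Δt * F' ^ 2 := by
  -- Fact 1 : ‖a‖² = ‖u'‖² + 2 Δt νT ‖m‖²
  have F1 : ‖a‖ ^ 2 = ‖u'‖ ^ 2 + 2 * (Δt * νT) * ‖A ((2:ℝ)⁻¹ • (a + u'))‖ ^ 2 := by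
    have h := h2 (a + u')
    rw [bdf2_half_smul A (a + u'), real_inner_smul_right,
      real_inner_self_eq_norm_sq, bdf2_inner_diff a u'] at h
    linarith
  -- Fact 2 : ‖2a - p‖² = ‖2u' - p‖² + 8 Δt νT ‖m‖² - 4 Δt νT ⟪m, A p⟫
  have F2 : ‖(2:ℝ) • a - p‖ ^ 2 =
      ‖(2:ℝ) • u' - p‖ ^ 2 + 8 * (Δt * νT) * ‖A ((2:ℝ)⁻¹ • (a + u'))‖ ^ 2
        - 4 * (Δt * νT) * ⟪A ((2:ℝ)⁻¹ • (a + u')), A p⟫ := by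
    have hd := bdf2_inner_diff ((2:ℝ) • a - p) ((2:ℝ) • u' - p)
    have e1 : ((2:ℝ) • a - p) - ((2:ℝ) • u' - p) = (2:ℝ) • (a - u') := by
      module
    have e2 : ((2:ℝ) • a - p) + ((2:ℝ) • u' - p) = (2:ℝ) • (a + u' - p) := by
      module
    rw [e1, e2, real_inner_smul_left, real_inner_smul_right] at hd
    have h := h2 (a + u' - p)
    simp only [map_sub, inner_sub_right] at h hd
    rw [bdf2_half_smul A (a + u'), real_inner_smul_right,
      real_inner_self_eq_norm_sq] at h
    linarith
  -- energy identity from step 1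
  have hg := bdf2_gstab a p q
  -- forcing bound
  have hfb : 4 * Δt * (⟪fv, a⟫ : ℝ)
      ≤ 2 * ν * Δt * ‖G a‖ ^ 2 + 2 * ν⁻¹ * Δt * F' ^ 2 := by
    have hν0 : ν ≠ 0 := hν.ne'
    have h5 : 2 * ν⁻¹ * Δt * (ν * ‖G a‖ - F') ^ 2
        = 2 * ν * Δt * ‖G a‖ ^ 2 + 2 * ν⁻¹ * Δt * F' ^ 2
          - 4 * Δt * (F' * ‖G a‖) := by
      field_simp
      ring
    have h6 : (0:ℝ) ≤ 2 * ν⁻¹ * Δt * (ν * ‖G a‖ - F') ^ 2 := by positivity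
    have h7 : 4 * Δt * (⟪fv, a⟫ : ℝ) ≤ 4 * Δt * (F' * ‖G a‖) := by
      apply mul_le_mul_of_nonneg_left hfa
      positivity
    linarith
  -- Cauchy-Schwarz and Young for the cross term
  have hcs : (⟪A ((2:ℝ)⁻¹ • (a + u')), A p⟫ : ℝ)
      ≤ ‖A ((2:ℝ)⁻¹ • (a + u'))‖ * ‖A p‖ := real_inner_le_norm _ _
  have hcross : 4 * (Δt * νT) * (⟪A ((2:ℝ)⁻¹ • (a + u')), A p⟫ : ℝ)
      ≤ 8 * (Δt * νT) * ‖A ((2:ℝ)⁻¹ • (a + u'))‖ ^ 2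
        + (Δt * νT) / 2 * ‖A p‖ ^ 2 := by
    nlinarith [mul_nonneg (by positivity : (0:ℝ) ≤ Δt * νT)
        (sq_nonneg (4 * ‖A ((2:ℝ)⁻¹ • (a + u'))‖ - ‖A p‖)),
      mul_le_mul_of_nonneg_left hcs (by positivity : (0:ℝ) ≤ 4 * (Δt * νT))]
  linarith

/-- conditional stability of the BDF2 post-processed VMS-POD scheme,
under `‖(I − P) y‖ ≤ ‖y‖` and `ν_T < 4ν`. -/
theorem bdf2_vms_pod_stability
    {X Y : Type*} [NormedAddCommGroup X] [InnerProductSpace ℝ X]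
    [NormedAddCommGroup Y] [InnerProductSpace ℝ Y]
    (G : X →ₗ[ℝ] Y) (P : Y →ₗ[ℝ] Y)
    (ν νT Δt : ℝ) (hν : 0 < ν) (hνT : 0 < νT) (hΔt : 0 < Δt)
    (hP : ∀ y : Y, ‖y - P y‖ ≤ ‖y‖) (hννT : νT < 4 * ν)
    (b : X →ₗ[ℝ] X →ₗ[ℝ] X →ₗ[ℝ] ℝ) (hb : ∀ x y : X, b x y y = 0)
    (M : ℕ) (f : ℕ → X) (F : ℕ → ℝ)
    (hF : ∀ n, 2 ≤ n → n ≤ M + 1 → 0 ≤ F n)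
    (hf : ∀ n, 2 ≤ n → n ≤ M + 1 → ∀ v : X, |(inner ℝ (f n) v : ℝ)| ≤ F n * ‖G v‖)
    (u w : ℕ → X) (hw1 : w 1 = 0)
    (hstep1 : ∀ n, 1 ≤ n → n ≤ M → ∀ ψ : X,
      (inner ℝ ((2 * Δt)⁻¹ • ((3:ℝ) • w (n+1) - (4:ℝ) • u n + u (n-1))) ψ : ℝ)
        + b (w (n+1)) (w (n+1)) ψ
        + ν * (inner ℝ (G (w (n+1))) (G ψ) : ℝ) = (inner ℝ (f (n+1)) ψ : ℝ))
    (hstep2 : ∀ n, 1 ≤ n → n ≤ M → ∀ ψ : X,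
      (inner ℝ (Δt⁻¹ • (w (n+1) - u (n+1))) ψ : ℝ) =
        νT * (inner ℝ (G ((2:ℝ)⁻¹ • (w (n+1) + u (n+1)))
            - P (G ((2:ℝ)⁻¹ • (w (n+1) + u (n+1)))))
          (G ψ - P (G ψ)) : ℝ)) :
    ‖u (M+1)‖ ^ 2 + ‖(2:ℝ) • u (M+1) - u M‖ ^ 2
      + 2 * νT * Δt * ‖G ((2:ℝ)⁻¹ • (w (M+1) + u (M+1)))
          - P (G ((2:ℝ)⁻¹ • (w (M+1) + u (M+1))))‖ ^ 2
      + 2 * ν * Δt * ‖G (w (M+1))‖ ^ 2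
      + ∑ n ∈ Finset.Icc 1 M, ‖w (n+1) - (2:ℝ) • u n + u (n-1)‖ ^ 2
      + (4 * ν - νT) * Δt / 2 * ∑ n ∈ Finset.Icc 1 (M - 1), ‖G (w (n+1))‖ ^ 2
      ≤ ‖u 1‖ ^ 2 + ‖(2:ℝ) • u 1 - u 0‖ ^ 2 + νT * Δt / 2 * ‖G (u 1)‖ ^ 2
        + 2 * ν⁻¹ * Δt * ∑ n ∈ Finset.Icc 1 M, F (n+1) ^ 2 := by
  classical
  set A : X →ₗ[ℝ] Y := (LinearMap.id - P) ∘ₗ G with hA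
  have hAdef : ∀ x : X, A x = G x - P (G x) := by
    intro x; simp [hA, LinearMap.sub_apply]
  have hAnorm : ∀ x : X, ‖A x‖ ≤ ‖G x‖ := by
    intro x; rw [hAdef]; exact hP (G x)
  -- reformulated step 2
  have step2' : ∀ n, 1 ≤ n → n ≤ M → ∀ ψ : X,
      (⟪w (n+1) - u (n+1), ψ⟫ : ℝ) =
        (Δt * νT) * ⟪A ((2:ℝ)⁻¹ • (w (n+1) + u (n+1))), A ψ⟫ := by
    intro n h1 h2 ψ
    have h := hstep2 n h1 h2 ψ
    rw [real_inner_smul_left] at h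
    rw [← hAdef, ← hAdef] at h
    calc (⟪w (n+1) - u (n+1), ψ⟫ : ℝ)
        = Δt * (Δt⁻¹ * ⟪w (n+1) - u (n+1), ψ⟫) := by
          field_simp
      _ = Δt * (νT * ⟪A ((2:ℝ)⁻¹ • (w (n+1) + u (n+1))), A ψ⟫) := by rw [h]
      _ = (Δt * νT) * ⟪A ((2:ℝ)⁻¹ • (w (n+1) + u (n+1))), A ψ⟫ := by ring
  have hmono : ∀ n, 1 ≤ n → n ≤ M →
      ‖A (u (n+1))‖ ^ 2 ≤ ‖G (w (n+1))‖ ^ 2 := by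
    intro n h1 h2
    have := bdf2_mono A (Δt * νT) (mul_pos hΔt hνT) (w (n+1)) (u (n+1))
      (step2' n h1 h2)
    have h2' : ‖A (w (n+1))‖ ^ 2 ≤ ‖G (w (n+1))‖ ^ 2 :=
      pow_le_pow_left₀ (norm_nonneg _) (hAnorm (w (n+1))) 2
    linarith
  -- the per-step estimate
  have key : ∀ n, 1 ≤ n → n ≤ M →
      ‖u (n+1)‖ ^ 2 + ‖(2:ℝ) • u (n+1) - u n‖ ^ 2
        + 2 * νT * Δt * ‖A ((2:ℝ)⁻¹ • (w (n+1) + u (n+1)))‖ ^ 2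
        + ‖w (n+1) - (2:ℝ) • u n + u (n-1)‖ ^ 2
        + 2 * ν * Δt * ‖G (w (n+1))‖ ^ 2
      ≤ ‖u n‖ ^ 2 + ‖(2:ℝ) • u n - u (n-1)‖ ^ 2
        + νT * Δt / 2 * ‖A (u n)‖ ^ 2 + 2 * ν⁻¹ * Δt * F (n+1) ^ 2 := by
    intro n h1 h2
    -- the scalar form of step 1 tested with w (n+1)
    have hS : (⟪(3:ℝ) • w (n+1) - (4:ℝ) • u n + u (n-1), w (n+1)⟫ : ℝ)
        = 2 * Δt * (⟪f (n+1), w (n+1)⟫ - ν * ‖G (w (n+1))‖ ^ 2) := by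
      have h := hstep1 n h1 h2 (w (n+1))
      rw [hb, real_inner_smul_left, real_inner_self_eq_norm_sq] at h
      have hne : (2 * Δt) ≠ 0 := by positivity
      field_simp at h
      linarith
    have hfa : (⟪f (n+1), w (n+1)⟫ : ℝ) ≤ F (n+1) * ‖G (w (n+1))‖ :=
      le_trans (le_abs_self _) (hf (n+1) (by omega) (by omega) (w (n+1)))
    have hineq := bdf2_key G A ν νT Δt (F (n+1)) hν hνT hΔt
      (hF (n+1) (by omega) (by omega))
      (w (n+1)) (u (n+1)) (u n) (u (n-1)) (f (n+1))
      (step2' n h1 h2) hS hfa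
    -- rearrange: also need the energy identity (G-stability)
    have hg := bdf2_gstab (w (n+1)) (u n) (u (n-1))
    linarith [hineq]
  -- main induction
  have main : ∀ j : ℕ, j ≤ M →
      ‖u (j+1)‖ ^ 2 + ‖(2:ℝ) • u (j+1) - u j‖ ^ 2
        + 2 * νT * Δt * ‖A ((2:ℝ)⁻¹ • (w (j+1) + u (j+1)))‖ ^ 2
        + 2 * ν * Δt * ‖G (w (j+1))‖ ^ 2
        + ∑ n ∈ Finset.Icc 1 j, ‖w (n+1) - (2:ℝ) • u n + u (n-1)‖ ^ 2
        + (4 * ν - νT) * Δt / 2 * ∑ n ∈ Finset.Icc 1 (j-1), ‖G (w (n+1))‖ ^ 2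
      ≤ ‖u 1‖ ^ 2 + ‖(2:ℝ) • u 1 - u 0‖ ^ 2 + νT * Δt / 2 * ‖G (u 1)‖ ^ 2
        + 2 * ν⁻¹ * Δt * ∑ n ∈ Finset.Icc 1 j, F (n+1) ^ 2 := by
    intro j
    induction j with
    | zero =>
      intro _
      have hIcc : Finset.Icc 1 0 = (∅ : Finset ℕ) := Finset.Icc_eq_empty (by omega)
      rw [hw1]
      have hAm : ‖A ((2:ℝ)⁻¹ • ((0:X) + u 1))‖ ^ 2 = (1/4) * ‖A (u 1)‖ ^ 2 := by
        rw [zero_add, map_smul, norm_smul, Real.norm_eq_abs, mul_pow]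
        norm_num
      have hAu : ‖A (u 1)‖ ^ 2 ≤ ‖G (u 1)‖ ^ 2 :=
        pow_le_pow_left₀ (norm_nonneg _) (hAnorm (u 1)) 2
      have hmul := mul_le_mul_of_nonneg_left hAu
        (show (0:ℝ) ≤ νT * Δt / 2 by positivity)
      simp only [hIcc, Finset.sum_empty, map_zero, norm_zero, hAm, Nat.zero_sub]
      nlinarith [hmul]
    | succ i ih =>
      intro hiM
      rcases i with _ | i'
      · -- first step: uses the reserve νT Δt/2 ‖G u¹‖²
        have hk := key 1 le_rfl (by omega)
        have hAu : ‖A (u 1)‖ ^ 2 ≤ ‖G (u 1)‖ ^ 2 :=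
          pow_le_pow_left₀ (norm_nonneg _) (hAnorm (u 1)) 2
        have hmul := mul_le_mul_of_nonneg_left hAu
          (show (0:ℝ) ≤ νT * Δt / 2 by positivity)
        have hIcc0 : Finset.Icc 1 0 = (∅ : Finset ℕ) := Finset.Icc_eq_empty (by omega)
        norm_num at hk ⊢
        linarith [hk, hmul]
      · -- generic step
        have hQ := ih (by omega)
        have hk := key (i' + 1 + 1) (by omega) (by omega)
        have hmono' := hmono (i' + 1) (by omega) (by omega)
        have hr := Finset.sum_Icc_succ_top (show 1 ≤ (i' + 1) + 1 by omega)
          (fun n => ‖w (n+1) - (2:ℝ) • u n + u (n-1)‖ ^ 2)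
        have hz := Finset.sum_Icc_succ_top (show 1 ≤ i' + 1 by omega)
          (fun n => ‖G (w (n+1))‖ ^ 2)
        have hFs := Finset.sum_Icc_succ_top (show 1 ≤ (i' + 1) + 1 by omega)
          (fun n => F (n+1) ^ 2)
        have hmul := mul_le_mul_of_nonneg_left hmono'
          (show (0:ℝ) ≤ νT * Δt / 2 by positivity)
        have hdrop : (0:ℝ) ≤ 2 * νT * Δt
            * ‖A ((2:ℝ)⁻¹ • (w (i'+1+1) + u (i'+1+1)))‖ ^ 2 := by positivity
        simp only [Nat.add_sub_cancel] at hQ hk hr hz hFs ⊢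
        have hz' : (4 * ν - νT) * Δt / 2 * ∑ n ∈ Finset.Icc 1 (i' + 1), ‖G (w (n+1))‖ ^ 2
            = (4 * ν - νT) * Δt / 2 * ∑ n ∈ Finset.Icc 1 i', ‖G (w (n+1))‖ ^ 2
              + (4 * ν - νT) * Δt / 2 * ‖G (w (i'+1+1))‖ ^ 2 := by
          rw [hz]; ring
        have hFs' : 2 * ν⁻¹ * Δt * ∑ n ∈ Finset.Icc 1 (i' + 1 + 1), F (n+1) ^ 2
            = 2 * ν⁻¹ * Δt * ∑ n ∈ Finset.Icc 1 (i' + 1), F (n+1) ^ 2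
              + 2 * ν⁻¹ * Δt * F (i'+1+1+1) ^ 2 := by
          rw [hFs]; ring
        linarith [hk, hQ, hmul, hdrop, hr, hz', hFs']
  have hfin := main M (le_refl M)
  rw [hAdef] at hfin
  exact hfin
end

section
/- If w, u⁺ ∈ X satisfy the post-processing (Step 2) relation, then for any u⁻ ∈ X the following identity (used in the BDF2 stability proof) holds: ‖2w − u⁻‖² − ‖2u⁺ − u⁻‖² = 8 ν_T Δt ‖(I − P) G((w + u⁺ − u⁻)/2)‖² − 8 ν_T Δt ⟨(I − P) G(−u⁻/2), (I − P) G((w + u⁺ − u⁻)/2)⟩. -/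
/-- identity used in the BDF2 stability proof: if `w, u⁺` satisfy the
post-processing (Step 2) relation, then for any `u⁻`,
`‖2w − u⁻‖² − ‖2u⁺ − u⁻‖² = 8 ν_T Δt ‖(I−P)G((w+u⁺−u⁻)/2)‖²
  − 8 ν_T Δt ⟨(I−P)G(−u⁻/2), (I−P)G((w+u⁺−u⁻)/2)⟩`. -/
theorem bdf2_step2_identity
    {X Y : Type*} [NormedAddCommGroup X] [InnerProductSpace ℝ X]
    [NormedAddCommGroup Y] [InnerProductSpace ℝ Y]
    (G : X →ₗ[ℝ] Y) (P : Y →ₗ[ℝ] Y)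
    (Δt νT : ℝ) (hΔt : 0 < Δt) (hνT : 0 < νT)
    (w up um : X)
    (hstep2 : ∀ ψ : X, (inner ℝ (Δt⁻¹ • (w - up)) ψ : ℝ) =
      νT * (inner ℝ (G ((2:ℝ)⁻¹ • (w + up)) - P (G ((2:ℝ)⁻¹ • (w + up))))
        (G ψ - P (G ψ)) : ℝ)) :
    ‖(2:ℝ) • w - um‖ ^ 2 - ‖(2:ℝ) • up - um‖ ^ 2 =
      8 * νT * Δt * ‖G ((2:ℝ)⁻¹ • (w + up - um))
          - P (G ((2:ℝ)⁻¹ • (w + up - um)))‖ ^ 2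
        - 8 * νT * Δt * (inner ℝ (G ((2:ℝ)⁻¹ • (-um)) - P (G ((2:ℝ)⁻¹ • (-um))))
            (G ((2:ℝ)⁻¹ • (w + up - um)) - P (G ((2:ℝ)⁻¹ • (w + up - um)))) : ℝ) := by
  set a := G ((2:ℝ)⁻¹ • (w + up - um)) - P (G ((2:ℝ)⁻¹ • (w + up - um))) with ha
  set b := G ((2:ℝ)⁻¹ • (-um)) - P (G ((2:ℝ)⁻¹ • (-um))) with hb
  have key : G ((2:ℝ)⁻¹ • (w + up)) - P (G ((2:ℝ)⁻¹ • (w + up))) = a - b := by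
    have h1 : (2:ℝ)⁻¹ • (w + up) = (2:ℝ)⁻¹ • (w + up - um) - (2:ℝ)⁻¹ • (-um) := by
      rw [← smul_sub]; congr 1; abel
    rw [ha, hb, h1, map_sub, map_sub]; abel
  have hg : G (w + up - um) = (2:ℝ) • G ((2:ℝ)⁻¹ • (w + up - um)) := by
    rw [map_smul, smul_smul]; norm_num
  have key2 : G (w + up - um) - P (G (w + up - um)) = (2:ℝ) • a := by
    rw [ha, hg]; simp only [map_smul, smul_sub]
  have h := hstep2 (w + up - um)
  rw [key, key2] at h
  simp only [real_inner_smul_left, real_inner_smul_right, inner_sub_left,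
    inner_sub_right, inner_add_left, inner_add_right] at h
  have h2 : (inner ℝ w w : ℝ) + inner ℝ w up - inner ℝ w um
      - ((inner ℝ up w : ℝ) + inner ℝ up up - inner ℝ up um)
      = Δt * (νT * (2 * ((inner ℝ a a : ℝ) - inner ℝ b a))) := by
    have hne : Δt ≠ 0 := ne_of_gt hΔt
    field_simp at h
    linarith
  have hnorm : ‖a‖ ^ 2 = (inner ℝ a a : ℝ) := (real_inner_self_eq_norm_sq a).symm
  rw [hnorm, ← real_inner_self_eq_norm_sq ((2:ℝ) • w - um),
    ← real_inner_self_eq_norm_sq ((2:ℝ) • up - um)]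
  simp only [inner_sub_left, inner_sub_right, inner_add_left, inner_add_right,
    real_inner_smul_left, real_inner_smul_right]
  have c1 : (inner ℝ up w : ℝ) = inner ℝ w up := (real_inner_comm up w).symm
  have c2 : (inner ℝ um w : ℝ) = inner ℝ w um := (real_inner_comm um w).symm
  have c3 : (inner ℝ um up : ℝ) = inner ℝ up um := (real_inner_comm um up).symm
  linarith
end

section
/- Consistency error of the backward difference quotient: let H be a real Hilbert space and u : ℝ → H be twice continuously differentiable on [t₀, t₁] with t₀ < t₁ and Δt := t₁ − t₀. Then ‖u'(t₁) − (u(t₁) − u(t₀))/Δt‖² ≤ (Δt/3) ∫_{t₀}^{t₁} ‖u''(s)‖² ds. -/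
open MeasureTheory Set intervalIntegral

/-- consistency error of the backward difference quotient: if `u` is twice
continuously differentiable on `[t₀, t₁]` with values in a real Hilbert space, then
`‖u'(t₁) − (u(t₁) − u(t₀))/Δt‖² ≤ (Δt/3) ∫_{t₀}^{t₁} ‖u''(s)‖² ds` with `Δt = t₁ − t₀`. -/
theorem backward_difference_consistency_error
    {H : Type*} [NormedAddCommGroup H] [InnerProductSpace ℝ H] [CompleteSpace H]
    (u u' u'' : ℝ → H) (t₀ t₁ : ℝ) (ht : t₀ < t₁)
    (hu : ∀ t ∈ Set.Icc t₀ t₁, HasDerivWithinAt u (u' t) (Set.Icc t₀ t₁) t)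
    (hu' : ∀ t ∈ Set.Icc t₀ t₁, HasDerivWithinAt u' (u'' t) (Set.Icc t₀ t₁) t)
    (hu'' : ContinuousOn u'' (Set.Icc t₀ t₁)) :
    ‖u' t₁ - (t₁ - t₀)⁻¹ • (u t₁ - u t₀)‖ ^ 2 ≤
      (t₁ - t₀) / 3 * ∫ s in t₀..t₁, ‖u'' s‖ ^ 2 := by
  have hle : t₀ ≤ t₁ := ht.le
  have hΔpos : (0:ℝ) < t₁ - t₀ := sub_pos.mpr ht
  have hΔne : (t₁ - t₀) ≠ 0 := ne_of_gt hΔpos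
  have huIcc : Set.uIcc t₀ t₁ = Set.Icc t₀ t₁ := Set.uIcc_of_le hle
  -- continuity of u and u'
  have hcu : ContinuousOn u (Set.Icc t₀ t₁) := fun t htI => (hu t htI).continuousWithinAt
  have hcu' : ContinuousOn u' (Set.Icc t₀ t₁) := fun t htI => (hu' t htI).continuousWithinAt
  -- the weighted second derivative
  set g : ℝ → H := fun s => (s - t₀) • u'' s with hg
  have hgc : ContinuousOn g (Set.Icc t₀ t₁) :=
    (continuousOn_id.sub continuousOn_const).smul hu''
  have hgint : IntervalIntegrable g volume t₀ t₁ :=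
    ContinuousOn.intervalIntegrable (by rwa [huIcc])
  -- FTC / integration by parts identity
  have key : (∫ s in t₀..t₁, g s) = (t₁ - t₀) • u' t₁ - (u t₁ - u t₀) := by
    have h := intervalIntegral.integral_eq_sub_of_hasDeriv_right_of_le hle
      (f := fun t => (t - t₀) • u' t - u t) (f' := g)
      (((continuousOn_id.sub continuousOn_const).smul hcu').sub hcu)
      (fun x hx => by
        have hxI : x ∈ Set.Icc t₀ t₁ := Set.Ioo_subset_Icc_self hx
        have hmem : Set.Icc t₀ t₁ ∈ nhds x := Icc_mem_nhds hx.1 hx.2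
        have hd : HasDerivAt u' (u'' x) x := (hu' x hxI).hasDerivAt hmem
        have hdu : HasDerivAt u (u' x) x := (hu x hxI).hasDerivAt hmem
        have hid : HasDerivAt (fun t : ℝ => t - t₀) 1 x := (hasDerivAt_id x).sub_const t₀
        have h2 : HasDerivAt (fun t => (t - t₀) • u' t - u t)
            (((x - t₀) • u'' x + (1:ℝ) • u' x) - u' x) x := (hid.smul hd).sub hdu
        have h3 : ((x - t₀) • u'' x + (1:ℝ) • u' x) - u' x = g x := by
          simp [hg]
        exact (h3 ▸ h2).hasDerivWithinAt)
      hgint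
    rw [h]; simp; abel
  -- rewrite the left-hand side
  have hlhs : u' t₁ - (t₁ - t₀)⁻¹ • (u t₁ - u t₀) = (t₁ - t₀)⁻¹ • ∫ s in t₀..t₁, g s := by
    have h : (t₁ - t₀)⁻¹ • ((t₁ - t₀) • u' t₁ - (u t₁ - u t₀))
        = u' t₁ - (t₁ - t₀)⁻¹ • (u t₁ - u t₀) := by
      rw [smul_sub, smul_smul, inv_mul_cancel₀ hΔne, one_smul]
    rw [key, h]
  -- Cauchy-Schwarz bound on ‖∫ g‖
  have hmeas : MeasurableSet (Set.Ioc t₀ t₁) := measurableSet_Ioc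
  have hIocIcc : Set.Ioc t₀ t₁ ⊆ Set.Icc t₀ t₁ := Set.Ioc_subset_Icc_self
  have h1 : ‖∫ s in t₀..t₁, g s‖ ≤ ∫ s in Set.Ioc t₀ t₁, (s - t₀) * ‖u'' s‖ := by
    rw [intervalIntegral.integral_of_le hle]
    refine le_trans (norm_integral_le_integral_norm _) (le_of_eq ?_)
    refine setIntegral_congr_fun hmeas fun s hs => ?_
    rw [hg]
    rw [norm_smul, Real.norm_eq_abs, abs_of_nonneg (sub_nonneg.mpr hs.1.le)]
  -- Memℒp facts
  have hconj : Real.HolderConjugate 2 2 := Real.holderConjugate_iff.mpr ⟨one_lt_two, by norm_num⟩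
  have hfin : IsFiniteMeasure (volume.restrict (Set.Ioc t₀ t₁)) :=
    ⟨by simp [Real.volume_Ioc]⟩
  have hmf : MemLp (fun s : ℝ => s - t₀) (ENNReal.ofReal 2)
      (volume.restrict (Set.Ioc t₀ t₁)) := by
    have hc : Continuous (fun s : ℝ => s - t₀) := continuous_id.sub continuous_const
    refine MemLp.of_bound hc.aestronglyMeasurable (t₁ - t₀) ?_
    filter_upwards [ae_restrict_mem hmeas] with s hs
    rw [Real.norm_eq_abs, abs_of_nonneg (sub_nonneg.mpr hs.1.le)]
    linarith [hs.2]
  obtain ⟨M, hM⟩ := isCompact_Icc.exists_bound_of_continuousOn hu''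
  have hmg : MemLp (fun s : ℝ => ‖u'' s‖) (ENNReal.ofReal 2)
      (volume.restrict (Set.Ioc t₀ t₁)) := by
    refine MemLp.of_bound ((hu''.norm.mono hIocIcc).aestronglyMeasurable hmeas) M ?_
    filter_upwards [ae_restrict_mem hmeas] with s hs
    rw [Real.norm_eq_abs, abs_of_nonneg (norm_nonneg _)]
    exact hM s (hIocIcc hs)
  set A : ℝ := ∫ s in Set.Ioc t₀ t₁, (s - t₀) ^ 2 with hA
  set B : ℝ := ∫ s in Set.Ioc t₀ t₁, ‖u'' s‖ ^ 2 with hB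
  have hAnn : 0 ≤ A := integral_nonneg fun s => sq_nonneg _
  have hBnn : 0 ≤ B := integral_nonneg fun s => sq_nonneg _
  have h2 : (∫ s in Set.Ioc t₀ t₁, (s - t₀) * ‖u'' s‖) ≤
      A ^ (1/(2:ℝ)) * B ^ (1/(2:ℝ)) := by
    have hh := integral_mul_le_Lp_mul_Lq_of_nonneg hconj
      (f := fun s : ℝ => s - t₀) (g := fun s : ℝ => ‖u'' s‖)
      (by filter_upwards [ae_restrict_mem hmeas] with s hs; exact sub_nonneg.mpr hs.1.le)
      (Filter.Eventually.of_forall fun s => norm_nonneg _) hmf hmg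
    have e1 : (∫ s in Set.Ioc t₀ t₁, (s - t₀) ^ (2:ℝ)) = A := by
      rw [hA]
      refine setIntegral_congr_fun hmeas fun s _ => ?_
      show (s - t₀) ^ (2:ℝ) = (s - t₀) ^ (2:ℕ)
      rw [← Real.rpow_natCast (s - t₀) 2]; norm_num
    have e2 : (∫ s in Set.Ioc t₀ t₁, ‖u'' s‖ ^ (2:ℝ)) = B := by
      rw [hB]
      refine setIntegral_congr_fun hmeas fun s _ => ?_
      show ‖u'' s‖ ^ (2:ℝ) = ‖u'' s‖ ^ (2:ℕ)
      rw [← Real.rpow_natCast ‖u'' s‖ 2]; norm_num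
    rw [← e1, ← e2]
    exact hh
  have h3 : ‖∫ s in t₀..t₁, g s‖ ^ 2 ≤ A * B := by
    have h4 := pow_le_pow_left₀ (norm_nonneg _) (h1.trans h2) 2
    refine h4.trans (le_of_eq ?_)
    rw [mul_pow, ← Real.rpow_natCast (A ^ (1/(2:ℝ))) 2, ← Real.rpow_natCast (B ^ (1/(2:ℝ))) 2,
      ← Real.rpow_mul hAnn, ← Real.rpow_mul hBnn]
    norm_num
  -- compute A
  have hAval : A = (t₁ - t₀) ^ 3 / 3 := by
    have e3 : A = ∫ s in t₀..t₁, (s - t₀) ^ 2 := by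
      rw [hA, intervalIntegral.integral_of_le hle]
    have e4 := intervalIntegral.integral_comp_sub_right (a := t₀) (b := t₁)
      (fun x : ℝ => x ^ 2) t₀
    rw [e3, e4, integral_pow]
    norm_num
  -- rewrite the RHS integral
  have hBeq : (∫ s in t₀..t₁, ‖u'' s‖ ^ 2) = B := by
    rw [hB, intervalIntegral.integral_of_le hle]
  rw [hlhs, hBeq, norm_smul, Real.norm_eq_abs, abs_of_pos (inv_pos.mpr hΔpos), mul_pow]
  calc (t₁ - t₀)⁻¹ ^ 2 * ‖∫ s in t₀..t₁, g s‖ ^ 2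
      ≤ (t₁ - t₀)⁻¹ ^ 2 * (A * B) := mul_le_mul_of_nonneg_left h3 (by positivity)
    _ = (t₁ - t₀) / 3 * B := by rw [hAval]; field_simp
end
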